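/- arXiv:2211.06057 — 5 statements merged into one kernel-verified Lean document; each statement's English description precedes it below -/
import Mathlib

section
/- Let m ∈ ℕ and let f : ℂ₊ → ℂ be holomorphic on the upper half-plane ℂ₊ = {z ∈ ℂ : Im z > 0}. Define g : ℂ₊ → ℂ by g(w) := w^m · f(−1/w) (note −1/w ∈ ℂ₊ for w ∈ ℂ₊, so g is holomorphic on ℂ₊). Then for every z ∈ ℂ₊ the (m+1)-st complex derivative of g satisfies g^{(m+1)}(z) = z^{−(m+2)} · f^{(m+1)}(−1/z), where f^{(m+1)} denotes the (m+1)-st complex derivative of f on ℂ₊. -/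
open Complex Set Filter Topology

namespace Stmt4Aux

noncomputable def U : Set ℂ := {z : ℂ | 0 < z.im}

lemma hUopen : IsOpen U := isOpen_lt continuous_const Complex.continuous_im

lemma ne_zero_of_mem {z : ℂ} (hz : z ∈ U) : z ≠ 0 := by
  rintro rfl; simpa [U] using hz

lemma inv_mem {z : ℂ} (hz : z ∈ U) : -1 / z ∈ U := by
  have hz0 : z ≠ 0 := ne_zero_of_mem hz
  have : (-1 / z).im = z.im / Complex.normSq z := by
    rw [neg_div, one_div, neg_im, inv_im]; ring
  simp only [U, mem_setOf_eq] at hz ⊢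
  rw [this]
  exact div_pos hz (Complex.normSq_pos.mpr hz0)

lemma hasDerivAt_neg_inv {z : ℂ} (hz : z ≠ 0) :
    HasDerivAt (fun w : ℂ => -1 / w) ((z ^ 2)⁻¹) z := by
  have := (hasDerivAt_inv hz).neg
  simpa [neg_div, one_div, Pi.neg_def] using this

lemma analyticAt_neg_inv {z : ℂ} (hz : z ≠ 0) :
    AnalyticAt ℂ (fun w : ℂ => -1 / w) z := by
  have : AnalyticAt ℂ (fun w : ℂ => -1 * w⁻¹) z :=
    analyticAt_const.mul (analyticAt_id.inv hz)
  simpa [div_eq_mul_inv] using this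

lemma iter_analytic {F : ℂ → ℂ} (hF : AnalyticOnNhd ℂ F U) (n : ℕ) :
    AnalyticOnNhd ℂ (iteratedDeriv n F) U := by
  induction n with
  | zero => simpa using hF
  | succ n ih => rw [iteratedDeriv_succ]; exact ih.deriv

end Stmt4Aux

namespace Stmt4Aux

lemma mul_id {h : ℂ → ℂ} (hh : AnalyticOnNhd ℂ h U) (k : ℕ) :
    ∀ z ∈ U, iteratedDeriv (k + 1) (fun w => w * h w) z
      = z * iteratedDeriv (k + 1) h z + ((k : ℂ) + 1) * iteratedDeriv k h z := by
  induction k with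
  | zero =>
    intro z hz
    have hd : DifferentiableAt ℂ h z := (hh z hz).differentiableAt
    have : HasDerivAt (fun w => w * h w) (1 * h z + z * deriv h z) z :=
      (hasDerivAt_id z).mul hd.hasDerivAt
    rw [show (0:ℕ)+1 = 1 from rfl, iteratedDeriv_one, iteratedDeriv_one,
      iteratedDeriv_zero, this.deriv]
    push_cast
    ring
  | succ k ih =>
    intro z hz
    have hev : iteratedDeriv (k + 1) (fun w => w * h w)
        =ᶠ[𝓝 z] fun w => w * iteratedDeriv (k + 1) h w + ((k : ℂ) + 1) * iteratedDeriv k h w := by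
      filter_upwards [hUopen.mem_nhds hz] with w hw using ih w hw
    have h1 : HasDerivAt (iteratedDeriv (k + 1) h) (iteratedDeriv (k + 2) h z) z := by
      have := ((iter_analytic hh (k + 1)) z hz).differentiableAt.hasDerivAt
      rwa [← iteratedDeriv_succ] at this
    have h0 : HasDerivAt (iteratedDeriv k h) (iteratedDeriv (k + 1) h z) z := by
      have := ((iter_analytic hh k) z hz).differentiableAt.hasDerivAt
      rwa [← iteratedDeriv_succ] at this
    have hR : HasDerivAt (fun w => w * iteratedDeriv (k + 1) h w
          + ((k : ℂ) + 1) * iteratedDeriv k h w)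
        (1 * iteratedDeriv (k + 1) h z + z * iteratedDeriv (k + 2) h z
          + ((k : ℂ) + 1) * iteratedDeriv (k + 1) h z) z :=
      (((hasDerivAt_id z).mul h1)).add ((h0.const_mul _))
    rw [iteratedDeriv_succ, hev.deriv_eq, hR.deriv]
    push_cast
    ring

end Stmt4Aux

namespace Stmt4Aux

lemma zpow_neg_natCast (z : ℂ) (k : ℕ) : z ^ (-(k : ℤ)) = (z ^ k)⁻¹ := by
  rw [zpow_neg, zpow_natCast]

lemma key (f : ℂ → ℂ) (hf : AnalyticOnNhd ℂ f U) (n : ℕ) :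
    ∀ z ∈ U, iteratedDeriv (n + 1) (fun w => w ^ n * f (-1 / w)) z
      = z ^ (-(n + 2 : ℤ)) * iteratedDeriv (n + 1) f (-1 / z) := by
  induction n with
  | zero =>
    intro z hz
    have hz0 := ne_zero_of_mem hz
    have hfun : (fun w : ℂ => w ^ 0 * f (-1 / w)) = fun w => f (-1 / w) := by
      funext w; simp
    have hdf : HasDerivAt f (deriv f (-1 / z)) (-1 / z) :=
      ((hf _ (inv_mem hz)).differentiableAt).hasDerivAt
    have hcomp : HasDerivAt (fun w => f (-1 / w)) (deriv f (-1 / z) * (z ^ 2)⁻¹) z :=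
      hdf.comp z (hasDerivAt_neg_inv hz0)
    rw [hfun, show (0 : ℕ) + 1 = 1 from rfl, iteratedDeriv_one, iteratedDeriv_one,
      hcomp.deriv, show (-(((0 : ℕ) : ℤ) + 2)) = -((2 : ℕ) : ℤ) by norm_num,
      zpow_neg_natCast]
    ring
  | succ n ih =>
    intro z hz
    have hz0 := ne_zero_of_mem hz
    have hgn_an : AnalyticOnNhd ℂ (fun w => w ^ n * f (-1 / w)) U := fun w hw =>
      (analyticAt_id.pow n).mul
        ((hf _ (inv_mem hw)).comp (analyticAt_neg_inv (ne_zero_of_mem hw)))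
    have hfun : (fun w : ℂ => w ^ (n + 1) * f (-1 / w))
        = fun w => w * (w ^ n * f (-1 / w)) := by funext w; ring
    rw [hfun, mul_id hgn_an (n + 1) z hz, ih z hz]
    -- compute the (n+2)-nd iterated derivative of gₙ via the derivative of the RHS of ih
    have hev : iteratedDeriv (n + 1) (fun w => w ^ n * f (-1 / w))
        =ᶠ[𝓝 z] fun w => w ^ (-(n + 2 : ℤ)) * iteratedDeriv (n + 1) f (-1 / w) := by
      filter_upwards [hUopen.mem_nhds hz] with w hw using ih w hw
    have hDf : HasDerivAt (iteratedDeriv (n + 1) f)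
        (iteratedDeriv (n + 2) f (-1 / z)) (-1 / z) := by
      have := ((iter_analytic hf (n + 1)) _ (inv_mem hz)).differentiableAt.hasDerivAt
      rwa [← iteratedDeriv_succ] at this
    have hcomp : HasDerivAt (fun w => iteratedDeriv (n + 1) f (-1 / w))
        (iteratedDeriv (n + 2) f (-1 / z) * (z ^ 2)⁻¹) z :=
      hDf.comp z (hasDerivAt_neg_inv hz0)
    have hzp : HasDerivAt (fun w : ℂ => w ^ (-(n + 2 : ℤ)))
        ((Int.cast (-(n + 2 : ℤ)) : ℂ) * z ^ ((-(n + 2 : ℤ)) - 1)) z :=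
      hasDerivAt_zpow _ _ (Or.inl hz0)
    have hR : HasDerivAt
        (fun w => w ^ (-(n + 2 : ℤ)) * iteratedDeriv (n + 1) f (-1 / w))
        ((Int.cast (-(n + 2 : ℤ)) : ℂ) * z ^ ((-(n + 2 : ℤ)) - 1) * iteratedDeriv (n + 1) f (-1 / z)
          + z ^ (-(n + 2 : ℤ)) * (iteratedDeriv (n + 2) f (-1 / z) * (z ^ 2)⁻¹)) z :=
      hzp.mul hcomp
    rw [iteratedDeriv_succ, hev.deriv_eq, hR.deriv]
    -- now pure algebra
    have e1 : z ^ (-(n + 2 : ℤ)) = (z ^ (n + 2))⁻¹ := by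
      rw [show (-(n + 2 : ℤ)) = -(((n + 2 : ℕ)) : ℤ) by push_cast; ring, zpow_neg_natCast]
    have e2 : z ^ ((-(n + 2 : ℤ)) - 1) = (z ^ (n + 3))⁻¹ := by
      rw [show ((-(n + 2 : ℤ)) - 1) = -(((n + 3 : ℕ)) : ℤ) by push_cast; ring, zpow_neg_natCast]
    have e3 : z ^ (-((n : ℤ) + 1 + 2)) = (z ^ (n + 3))⁻¹ := by
      rw [show (-((n : ℤ) + 1 + 2)) = -(((n + 3 : ℕ)) : ℤ) by push_cast; ring, zpow_neg_natCast]
    rw [e1, e2]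
    push_cast [e3]
    have hpow2 : (z : ℂ) ^ 2 ≠ 0 := pow_ne_zero _ hz0
    field_simp
    ring

end Stmt4Aux

/-- the (m+1)-st derivative intertwines the weighted actions of the
inversion `z ↦ -1/z` on the upper half-plane. -/
theorem stmt_4 (m : ℕ) (f : ℂ → ℂ)
    (hf : DifferentiableOn ℂ f {z : ℂ | 0 < z.im})
    (g : ℂ → ℂ) (hg : ∀ w : ℂ, g w = w ^ m * f (-1 / w)) :
    ∀ z : ℂ, 0 < z.im →
      iteratedDeriv (m + 1) g z
        = z ^ (-(m + 2 : ℤ)) * iteratedDeriv (m + 1) f (-1 / z) := by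
  intro z hz
  have hgfun : g = fun w => w ^ m * f (-1 / w) := funext hg
  rw [hgfun]
  exact Stmt4Aux.key f (hf.analyticOnNhd Stmt4Aux.hUopen) m z hz
end

section
/- Let n ∈ ℕ and let 𝒰_{n+1} := {(ζ,z) ∈ ℂ^n × ℂ : Im z > ‖ζ‖²} be the Siegel upper half-space. Let A : ℂ^n × ℂ → ℂ^n × ℂ be a ℂ-linear bijection with A(𝒰_{n+1}) = 𝒰_{n+1}. Then there exist R > 0 and a unitary operator U on ℂ^n such that A(ζ,z) = (R·Uζ, R²·z) for all (ζ,z); conversely, every map of this form is a linear bijection preserving 𝒰_{n+1}. -/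
noncomputable section

open Complex

/-- The Siegel upper half-space `𝒰_{n+1}`. -/
def SiegelU (n : ℕ) : Set (EuclideanSpace ℂ (Fin n) × ℂ) :=
  {w | ‖w.1‖ ^ 2 < w.2.im}

private lemma real_mul_im' (a : ℝ) (z : ℂ) : ((a : ℂ) * z).im = a * z.im := by
  simp [Complex.mul_im]

private lemma I_mul_ofReal_mul_im (r a : ℝ) : (Complex.I * (r : ℂ) * (a : ℂ)).im = r * a := by
  simp only [Complex.mul_im, Complex.mul_re, Complex.I_re, Complex.I_im, Complex.ofReal_re,
    Complex.ofReal_im]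
  ring

private lemma I_mul_ofReal_im (r : ℝ) : (Complex.I * (r : ℂ)).im = r := by
  simp only [Complex.mul_im, Complex.I_re, Complex.I_im, Complex.ofReal_re, Complex.ofReal_im]
  ring

private lemma siegel_cone_char (n : ℕ) (v : EuclideanSpace ℂ (Fin n) × ℂ) :
    (∀ p ∈ SiegelU n, ∀ t : ℝ, 0 ≤ t → p + t • v ∈ SiegelU n) ↔
      (v.1 = 0 ∧ 0 ≤ v.2.im) := by
  constructor
  · intro h
    have h0 : ((0 : EuclideanSpace ℂ (Fin n)), Complex.I) ∈ SiegelU n := by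
      simp [SiegelU]
    have key : ∀ t : ℝ, 0 ≤ t → t ^ 2 * ‖v.1‖ ^ 2 < 1 + t * v.2.im := by
      intro t ht
      have := h _ h0 t ht
      simp only [SiegelU, Set.mem_setOf_eq, Prod.fst_add, Prod.snd_add, Prod.smul_fst,
        Prod.smul_snd, zero_add, Complex.add_im, Complex.I_im, Complex.smul_im] at this
      calc t ^ 2 * ‖v.1‖ ^ 2 = ‖t • v.1‖ ^ 2 := by
            rw [norm_smul, Real.norm_eq_abs, mul_pow, _root_.sq_abs]
        _ < 1 + t * v.2.im := by simpa [smul_eq_mul] using this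
    have hv1 : v.1 = 0 := by
      by_contra hne
      have ha : 0 < ‖v.1‖ ^ 2 := pow_pos (norm_pos_iff.mpr hne) 2
      set a := ‖v.1‖ ^ 2
      set b := v.2.im
      set t := max 1 ((2 + |b|) / a) with ht
      have ht1 : (1 : ℝ) ≤ t := le_max_left _ _
      have ht0 : 0 ≤ t := by linarith
      have hta : 2 + |b| ≤ t * a := by
        rw [← div_le_iff₀ ha]; exact le_max_right _ _
      have h2 : t * (2 + |b|) ≤ t * (t * a) :=
        mul_le_mul_of_nonneg_left hta ht0
      have hb : t * b ≤ t * |b| := mul_le_mul_of_nonneg_left (le_abs_self b) ht0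
      have := key t ht0
      nlinarith
    refine ⟨hv1, ?_⟩
    by_contra hneg
    push_neg at hneg
    have hm : 0 < -v.2.im := by linarith
    have ht0 : 0 ≤ (-v.2.im)⁻¹ := by positivity
    have hk := key _ ht0
    rw [hv1] at hk
    simp only [norm_zero] at hk
    have he : (-v.2.im)⁻¹ * v.2.im = -1 := by
      field_simp
      rw [div_self hneg.ne]
    nlinarith
  · rintro ⟨h1, h2⟩ p hp t ht
    simp only [SiegelU, Set.mem_setOf_eq, Prod.fst_add, Prod.snd_add, Prod.smul_fst,
      Prod.smul_snd, h1, smul_zero, add_zero, Complex.add_im, Complex.smul_im,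
      smul_eq_mul]
    have : 0 ≤ t * v.2.im := mul_nonneg ht h2
    have hp' : ‖p.1‖ ^ 2 < p.2.im := hp
    linarith

/-- classification of the linear automorphisms of the Siegel
upper half-space. -/
theorem stmt_5 (n : ℕ)
    (A : EuclideanSpace ℂ (Fin n) × ℂ → EuclideanSpace ℂ (Fin n) × ℂ) :
    (IsLinearMap ℂ A ∧ Function.Bijective A ∧ A '' SiegelU n = SiegelU n) ↔
      ∃ R : ℝ, 0 < R ∧
        ∃ U : EuclideanSpace ℂ (Fin n) ≃ₗᵢ[ℂ] EuclideanSpace ℂ (Fin n),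
          ∀ (ζ : EuclideanSpace ℂ (Fin n)) (z : ℂ),
            A (ζ, z) = (R • U ζ, (R : ℂ) ^ 2 * z) := by
  have hsm : ∀ (r : ℝ) (y : EuclideanSpace ℂ (Fin n)), (r : ℂ) • y = r • y := fun r y => by
    rw [← smul_one_smul ℂ r y, Complex.real_smul, mul_one]
  constructor
  · rintro ⟨hlin, hbij, himg⟩
    have hsmR : ∀ (t : ℝ) (x : EuclideanSpace ℂ (Fin n) × ℂ), A (t • x) = t • A x := by
      intro t x
      have h1 : (t : ℂ) • x = t • x := by
        rw [← smul_one_smul ℂ t x, Complex.real_smul, mul_one]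
      have h2 : (t : ℂ) • A x = t • A x := by
        rw [← smul_one_smul ℂ t (A x), Complex.real_smul, mul_one]
      rw [← h1, hlin.map_smul, h2]
    have hmemS : ∀ p, p ∈ SiegelU n → A p ∈ SiegelU n := fun p hp => himg ▸ ⟨p, hp, rfl⟩
    have hmemS' : ∀ p, A p ∈ SiegelU n → p ∈ SiegelU n := by
      intro p hp
      rw [← himg] at hp
      obtain ⟨q, hq, hqe⟩ := hp
      rwa [hbij.1 hqe] at hq
    have hcone : ∀ v : EuclideanSpace ℂ (Fin n) × ℂ,
        (v.1 = 0 ∧ 0 ≤ v.2.im) → ((A v).1 = 0 ∧ 0 ≤ (A v).2.im) := by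
      intro v hv
      rw [← siegel_cone_char] at hv ⊢
      intro p hp t ht
      obtain ⟨q, hq, rfl⟩ : ∃ q ∈ SiegelU n, A q = p := by
        rw [← himg] at hp; obtain ⟨q, hq, hqe⟩ := hp; exact ⟨q, hq, hqe⟩
      have heq : A (q + t • v) = A q + t • A v := by
        rw [hlin.map_add, hsmR]
      rw [← heq]
      exact hmemS _ (hv q hq t ht)
    -- the action on the axis {0} × ℂ
    set c : ℂ := (A ((0 : EuclideanSpace ℂ (Fin n)), (1 : ℂ))).2 with hc
    have h01 : (A ((0 : EuclideanSpace ℂ (Fin n)), (1 : ℂ))).1 = 0 :=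
      (hcone ((0 : EuclideanSpace ℂ (Fin n)), (1 : ℂ)) ⟨rfl, by norm_num⟩).1
    have hA01 : A ((0 : EuclideanSpace ℂ (Fin n)), (1 : ℂ)) = (0, c) := Prod.ext h01 rfl
    have hAz : ∀ z : ℂ, A ((0 : EuclideanSpace ℂ (Fin n)), z) = (0, z * c) := by
      intro z
      have h1 : ((0 : EuclideanSpace ℂ (Fin n)), z)
          = z • ((0 : EuclideanSpace ℂ (Fin n)), (1 : ℂ)) := by
        refine Prod.ext ?_ ?_ <;> simp
      rw [h1, hlin.map_smul, hA01]
      refine Prod.ext ?_ ?_ <;> simp [smul_eq_mul, mul_comm]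
    have hcim : c.im = 0 := by
      have h1 := (hcone ((0 : EuclideanSpace ℂ (Fin n)), (1 : ℂ)) ⟨rfl, by norm_num⟩).2
      have h2 := (hcone ((0 : EuclideanSpace ℂ (Fin n)), (-1 : ℂ)) ⟨rfl, by norm_num⟩).2
      rw [hAz 1, one_mul] at h1
      rw [hAz (-1)] at h2
      simp only [neg_one_mul, Complex.neg_im] at h2
      linarith
    have hcre : 0 < c.re := by
      have h3 := (hcone ((0 : EuclideanSpace ℂ (Fin n)), Complex.I) ⟨rfl, by simp⟩).2
      rw [hAz Complex.I] at h3
      simp only [Complex.mul_im, Complex.I_re, Complex.I_im, zero_mul, one_mul, zero_add] at h3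
      rcases h3.lt_or_eq with h | h
      · exact h
      · exfalso
        have hc0 : c = 0 := Complex.ext h.symm hcim
        have hz : A ((0 : EuclideanSpace ℂ (Fin n)), (0 : ℂ)) = 0 := hlin.map_zero
        have : A ((0 : EuclideanSpace ℂ (Fin n)), (1 : ℂ))
            = A ((0 : EuclideanSpace ℂ (Fin n)), (0 : ℂ)) := by
          rw [hA01, hc0, hz]
          rfl
        have h10 := hbij.1 this
        simp only [Prod.mk.injEq] at h10
        exact one_ne_zero h10.2
    set cr : ℝ := c.re with hcr
    have hcR : c = (cr : ℂ) := Complex.ext rfl (by simpa using hcim)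
    set R : ℝ := Real.sqrt cr with hRdef
    have hR : 0 < R := Real.sqrt_pos.mpr hcre
    have hR2 : R ^ 2 = cr := Real.sq_sqrt hcre.le
    -- splitting of A
    have hsplit : ∀ (ζ : EuclideanSpace ℂ (Fin n)) (z : ℂ),
        A (ζ, z) = A (ζ, 0) + (0, z * c) := by
      intro ζ z
      rw [← hAz, ← hlin.map_add]
      congr 1
      refine Prod.ext ?_ ?_ <;> simp
    -- key identity
    have hkey : ∀ ζ : EuclideanSpace ℂ (Fin n),
        ‖(A (ζ, 0)).1‖ ^ 2 = (A (ζ, 0)).2.im + cr * ‖ζ‖ ^ 2 := by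
      intro ζ
      have hmem : ∀ s : ℝ, ((ζ, Complex.I * ((‖ζ‖ ^ 2 + s : ℝ) : ℂ)) ∈ SiegelU n) ↔
          0 < s := by
        intro s
        simp only [SiegelU, Set.mem_setOf_eq, I_mul_ofReal_im]
        constructor <;> intro h <;> linarith
      have hval : ∀ s : ℝ, (A (ζ, Complex.I * ((‖ζ‖ ^ 2 + s : ℝ) : ℂ)) ∈ SiegelU n) ↔
          ‖(A (ζ, 0)).1‖ ^ 2 < (A (ζ, 0)).2.im + (‖ζ‖ ^ 2 + s) * cr := by
        intro s
        rw [hsplit]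
        have him : ((Complex.I * ((‖ζ‖ ^ 2 + s : ℝ) : ℂ)) * c).im = (‖ζ‖ ^ 2 + s) * cr := by
          rw [hcR, I_mul_ofReal_mul_im]
        simp only [SiegelU, Set.mem_setOf_eq, Prod.fst_add, Prod.snd_add, add_zero,
          Complex.add_im, him]
      have hupper : ‖(A (ζ, 0)).1‖ ^ 2 ≤ (A (ζ, 0)).2.im + cr * ‖ζ‖ ^ 2 := by
        refine le_of_forall_pos_le_add fun ε hε => ?_
        have hs : (0 : ℝ) < ε / cr := by positivity
        have h1 : (ζ, Complex.I * ((‖ζ‖ ^ 2 + ε / cr : ℝ) : ℂ)) ∈ SiegelU n := (hmem _).mpr hs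
        have h2 := (hval _).mp (hmemS _ h1)
        have h3 : (‖ζ‖ ^ 2 + ε / cr) * cr = cr * ‖ζ‖ ^ 2 + ε := by
          field_simp
        rw [h3] at h2
        linarith
      have hlower : (A (ζ, 0)).2.im + cr * ‖ζ‖ ^ 2 ≤ ‖(A (ζ, 0)).1‖ ^ 2 := by
        refine le_of_forall_pos_le_add fun ε hε => ?_
        have hs : (0 : ℝ) < -(ε / cr) → False := by
          intro h; have : (0:ℝ) < ε / cr := by positivity
          linarith
        have h1 : (ζ, Complex.I * ((‖ζ‖ ^ 2 + (-(ε / cr)) : ℝ) : ℂ)) ∉ SiegelU n := by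
          rw [hmem]; exact hs
        have h2 : ¬ (A (ζ, Complex.I * ((‖ζ‖ ^ 2 + (-(ε / cr)) : ℝ) : ℂ)) ∈ SiegelU n) :=
          fun hh => h1 (hmemS' _ hh)
        rw [hval] at h2
        push_neg at h2
        have h3 : (‖ζ‖ ^ 2 + (-(ε / cr))) * cr = cr * ‖ζ‖ ^ 2 - ε := by
          field_simp; ring
        rw [h3] at h2
        linarith
      linarith
    -- the ζ-part of the second component vanishes
    have hmu : ∀ ζ : EuclideanSpace ℂ (Fin n), (A (ζ, 0)).2 = 0 := by
      intro ζ
      have hnegpt : ((-ζ : EuclideanSpace ℂ (Fin n)), (0 : ℂ)) = -(ζ, (0 : ℂ)) := by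
        refine Prod.ext ?_ ?_ <;> simp
      have hIpt : ((Complex.I • ζ : EuclideanSpace ℂ (Fin n)), (0 : ℂ))
          = Complex.I • (ζ, (0 : ℂ)) := by
        refine Prod.ext ?_ ?_ <;> simp
      have hAneg : A (-ζ, 0) = -A (ζ, 0) := by rw [hnegpt, hlin.map_neg]
      have hAI : A (Complex.I • ζ, 0) = Complex.I • A (ζ, 0) := by
        rw [hIpt, hlin.map_smul]
      have k1 := hkey ζ
      have k2 := hkey (-ζ)
      have k3 := hkey (Complex.I • ζ)
      rw [hAneg] at k2
      rw [hAI] at k3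
      simp only [Prod.fst_neg, Prod.snd_neg, norm_neg, Complex.neg_im, norm_neg] at k2
      have him0 : (A (ζ, 0)).2.im = 0 := by linarith
      have hnormI : ‖(Complex.I • ζ : EuclideanSpace ℂ (Fin n))‖ = ‖ζ‖ := by
        rw [norm_smul]; simp
      have hnormI2 : ‖(Complex.I • A (ζ, 0)).1‖ = ‖(A (ζ, 0)).1‖ := by
        simp only [Prod.smul_fst]
        rw [norm_smul]; simp
      rw [hnormI, hnormI2] at k3
      have hre0 : (A (ζ, 0)).2.re = 0 := by
        have : (Complex.I • A (ζ, 0)).2.im = (A (ζ, 0)).2.re := by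
          simp [Prod.smul_snd, smul_eq_mul, Complex.mul_im]
        rw [this] at k3
        linarith
      exact Complex.ext hre0 him0
    have hT : ∀ ζ : EuclideanSpace ℂ (Fin n), ‖(A (ζ, 0)).1‖ = R * ‖ζ‖ := by
      intro ζ
      have h1 := hkey ζ
      rw [hmu ζ] at h1
      simp only [Complex.zero_im, zero_add] at h1
      have : ‖(A (ζ, 0)).1‖ = Real.sqrt (cr * ‖ζ‖ ^ 2) := by
        rw [← h1, Real.sqrt_sq (norm_nonneg _)]
      rw [this, Real.sqrt_mul hcre.le, Real.sqrt_sq (norm_nonneg _)]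
    -- build the linear isometry equivalence
    set Tlin : EuclideanSpace ℂ (Fin n) →ₗ[ℂ] EuclideanSpace ℂ (Fin n) :=
      { toFun := fun ζ => (A (ζ, 0)).1
        map_add' := by
          intro x y
          have h : ((x + y : EuclideanSpace ℂ (Fin n)), (0 : ℂ)) = (x, (0 : ℂ)) + (y, 0) := by
            refine Prod.ext ?_ ?_ <;> simp
          show (A ((x + y : EuclideanSpace ℂ (Fin n)), (0 : ℂ))).1
            = (A (x, (0 : ℂ))).1 + (A (y, (0 : ℂ))).1
          rw [h, hlin.map_add]; rfl
        map_smul' := by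
          intro a x
          have h : ((a • x : EuclideanSpace ℂ (Fin n)), (0 : ℂ)) = a • (x, (0 : ℂ)) := by
            refine Prod.ext ?_ ?_ <;> simp
          show (A ((a • x : EuclideanSpace ℂ (Fin n)), (0 : ℂ))).1 = a • (A (x, (0 : ℂ))).1
          rw [h, hlin.map_smul]; rfl } with hTlin
    set Ulin : EuclideanSpace ℂ (Fin n) →ₗ[ℂ] EuclideanSpace ℂ (Fin n) :=
      ((R⁻¹ : ℝ) : ℂ) • Tlin with hUlin
    have hUapp : ∀ ζ, Ulin ζ = (R⁻¹ : ℝ) • (A (ζ, 0)).1 := by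
      intro ζ
      rw [hUlin]
      simp only [LinearMap.smul_apply]
      rw [hsm]
      rfl
    have hUnorm : ∀ ζ, ‖Ulin ζ‖ = ‖ζ‖ := by
      intro ζ
      rw [hUapp, norm_smul, Real.norm_eq_abs, abs_of_pos (by positivity), hT]
      field_simp
    have hUinj : Function.Injective Ulin := by
      intro x y hxy
      have : ‖Ulin (x - y)‖ = 0 := by rw [map_sub, hxy, sub_self, norm_zero]
      rw [hUnorm] at this
      have := norm_eq_zero.mp this
      exact sub_eq_zero.mp this
    have hUsurj : Function.Surjective Ulin := by
      intro η
      obtain ⟨⟨ζ, z⟩, hx⟩ := hbij.2 (η, 0)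
      have hTζ : (A (ζ, 0)).1 = η := by
        have := congrArg Prod.fst hx
        rw [hsplit] at this
        simpa using this
      refine ⟨((R : ℝ) : ℂ) • ζ, ?_⟩
      rw [map_smul, hUapp, hTζ, hsm, smul_smul, mul_inv_cancel₀ hR.ne', one_smul]
    set Uequiv : EuclideanSpace ℂ (Fin n) ≃ₗ[ℂ] EuclideanSpace ℂ (Fin n) :=
      LinearEquiv.ofBijective Ulin ⟨hUinj, hUsurj⟩ with hUequiv
    refine ⟨R, hR, { toLinearEquiv := Uequiv, norm_map' := hUnorm }, ?_⟩
    intro ζ z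
    rw [hsplit]
    refine Prod.ext ?_ ?_
    · show (A (ζ, 0)).1 + 0 = R • Ulin ζ
      rw [hUapp, add_zero, smul_smul, mul_inv_cancel₀ hR.ne', one_smul]
    · show (A (ζ, 0)).2 + z * c = (R : ℂ) ^ 2 * z
      rw [hmu ζ, zero_add, hcR, ← hR2]
      push_cast
      ring
  · rintro ⟨R, hR, U, hU⟩
    have hgen : ∀ w : EuclideanSpace ℂ (Fin n) × ℂ,
        A w = (R • U w.1, (R : ℂ) ^ 2 * w.2) := fun w => hU w.1 w.2
    refine ⟨?_, ?_, ?_⟩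
    · constructor
      · intro x y
        rw [hgen, hgen, hgen]
        refine Prod.ext ?_ ?_
        · simp [map_add, smul_add]
        · simp [mul_add]
      · intro a x
        rw [hgen, hgen]
        refine Prod.ext ?_ ?_
        · show R • U (a • x.1) = a • (R • U x.1)
          rw [map_smul, smul_comm]
        · show (R : ℂ) ^ 2 * (a * x.2) = a * ((R : ℂ) ^ 2 * x.2)
          ring
    · have hli : Function.LeftInverse
          (fun w : EuclideanSpace ℂ (Fin n) × ℂ =>
            ((R⁻¹ : ℝ) • U.symm w.1, ((R : ℂ) ^ 2)⁻¹ * w.2)) A := by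
        intro x
        rw [hgen]
        refine Prod.ext ?_ ?_
        · show (R⁻¹ : ℝ) • U.symm (R • U x.1) = x.1
          rw [← hsm, ← hsm, map_smul, LinearIsometryEquiv.symm_apply_apply,
            smul_smul, ← Complex.ofReal_mul, inv_mul_cancel₀ hR.ne', Complex.ofReal_one,
            one_smul]
        · show ((R : ℂ) ^ 2)⁻¹ * ((R : ℂ) ^ 2 * x.2) = x.2
          have : (R : ℂ) ≠ 0 := by exact_mod_cast hR.ne'
          field_simp
      have hri : Function.RightInverse
          (fun w : EuclideanSpace ℂ (Fin n) × ℂ =>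
            ((R⁻¹ : ℝ) • U.symm w.1, ((R : ℂ) ^ 2)⁻¹ * w.2)) A := by
        intro w
        rw [hgen]
        refine Prod.ext ?_ ?_
        · show R • U ((R⁻¹ : ℝ) • U.symm w.1) = w.1
          rw [← hsm, ← hsm, map_smul, LinearIsometryEquiv.apply_symm_apply,
            smul_smul, ← Complex.ofReal_mul, mul_inv_cancel₀ hR.ne', Complex.ofReal_one,
            one_smul]
        · show (R : ℂ) ^ 2 * (((R : ℂ) ^ 2)⁻¹ * w.2) = w.2
          have : (R : ℂ) ≠ 0 := by exact_mod_cast hR.ne'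
          field_simp
      exact ⟨hli.injective, hri.surjective⟩
    · ext w
      constructor
      · rintro ⟨x, hx, rfl⟩
        rw [hgen]
        show ‖R • U x.1‖ ^ 2 < ((R : ℂ) ^ 2 * x.2).im
        have h1 : ‖R • U x.1‖ = R * ‖x.1‖ := by
          rw [norm_smul, Real.norm_eq_abs, abs_of_pos hR, U.norm_map]
        have h2 : ((R : ℂ) ^ 2 * x.2).im = R ^ 2 * x.2.im := by
          rw [← Complex.ofReal_pow, real_mul_im']
        rw [h1, h2, mul_pow]
        have hx' : ‖x.1‖ ^ 2 < x.2.im := hx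
        exact mul_lt_mul_of_pos_left hx' (by positivity)
      · intro hw
        refine ⟨((R⁻¹ : ℝ) • U.symm w.1, ((R : ℂ) ^ 2)⁻¹ * w.2), ?_, ?_⟩
        · show ‖(R⁻¹ : ℝ) • U.symm w.1‖ ^ 2 < (((R : ℂ) ^ 2)⁻¹ * w.2).im
          have h1 : ‖(R⁻¹ : ℝ) • U.symm w.1‖ = R⁻¹ * ‖w.1‖ := by
            rw [norm_smul, Real.norm_eq_abs, abs_of_pos (by positivity), U.symm.norm_map]
          have h2 : (((R : ℂ) ^ 2)⁻¹ * w.2).im = (R ^ 2)⁻¹ * w.2.im := by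
            rw [← Complex.ofReal_pow, ← Complex.ofReal_inv, real_mul_im']
          have hw' : ‖w.1‖ ^ 2 < w.2.im := hw
          rw [h1, h2, mul_pow]
          have hR2 : (0 : ℝ) < (R ^ 2)⁻¹ := by positivity
          calc R⁻¹ ^ 2 * ‖w.1‖ ^ 2 = (R ^ 2)⁻¹ * ‖w.1‖ ^ 2 := by rw [inv_pow]
            _ < (R ^ 2)⁻¹ * w.2.im := mul_lt_mul_of_pos_left hw' hR2
        · rw [hgen]
          refine Prod.ext ?_ ?_
          · show R • U ((R⁻¹ : ℝ) • U.symm w.1) = w.1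
            rw [← hsm, ← hsm, map_smul, LinearIsometryEquiv.apply_symm_apply,
              smul_smul, ← Complex.ofReal_mul, mul_inv_cancel₀ hR.ne', Complex.ofReal_one,
              one_smul]
          · show (R : ℂ) ^ 2 * (((R : ℂ) ^ 2)⁻¹ * w.2) = w.2
            have : (R : ℂ) ≠ 0 := by exact_mod_cast hR.ne'
            field_simp
end
end

section
/- Let n ∈ ℕ and let 𝒰_{n+1} := {(ζ,z) ∈ ℂ^n × ℂ : Im z > ‖ζ‖²}. Let A : ℂ^n × ℂ → ℂ^n × ℂ be an affine bijection (A(v) = L(v) + b with L a ℂ-linear bijection and b ∈ ℂ^n × ℂ) such that A(𝒰_{n+1}) = 𝒰_{n+1}. Then there exist (ζ₀,x) ∈ ℂ^n × ℝ, R > 0 and a unitary operator U on ℂ^n such that A(ζ,z) = (ζ₀ + R·Uζ, R²·z + x + i‖ζ₀‖² + 2i⟨R·Uζ|ζ₀⟩) for all (ζ,z); conversely, every map of this form is an affine bijection preserving 𝒰_{n+1}. In other words, the group of affine automorphisms of 𝒰_{n+1} is the semi-direct product of the Heisenberg translations τ_{(ζ₀,x)} and the linear automorphisms (ζ,z) ↦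 (R·Uζ, R²·z). -/
noncomputable section

open Complex

abbrev Ee (n : ℕ) := EuclideanSpace ℂ (Fin n)

theorem closure_SiegelU (n : ℕ) :
    closure (SiegelU n) = {w : Ee n × ℂ | ‖w.1‖ ^ 2 ≤ w.2.im} := by
  apply subset_antisymm
  · refine closure_minimal (fun w hw => ?_)
      (isClosed_le ((continuous_norm.comp continuous_fst).pow 2)
        (Complex.continuous_im.comp continuous_snd))
    exact le_of_lt (show ‖w.1‖ ^ 2 < w.2.im from hw)
  · intro w hw
    have hw' : ‖w.1‖ ^ 2 ≤ w.2.im := hw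
    apply mem_closure_iff_seq_limit.mpr
    refine ⟨fun k => (w.1, w.2 + (((((k:ℝ)+1)⁻¹ : ℝ)) : ℂ) * I), fun k => ?_, ?_⟩
    · have hk : (0:ℝ) < ((k:ℝ)+1)⁻¹ := by positivity
      show ‖w.1‖ ^ 2 < (w.2 + (((((k:ℝ)+1)⁻¹ : ℝ)) : ℂ) * I).im
      rw [Complex.add_im]
      have : ((((((k:ℝ)+1)⁻¹ : ℝ)) : ℂ) * I).im = ((k:ℝ)+1)⁻¹ := by
        rw [Complex.mul_im, Complex.ofReal_re, Complex.ofReal_im, Complex.I_im, Complex.I_re]; ring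
      rw [this]
      linarith
    · have h1 : Filter.Tendsto (fun k : ℕ => (((k:ℝ)+1)⁻¹ : ℝ)) Filter.atTop (nhds 0) := by
        exact tendsto_one_div_add_atTop_nhds_zero_nat.congr (by intro k; rw [one_div])
      have h2 : Filter.Tendsto (fun k : ℕ => w.2 + (((((k:ℝ)+1)⁻¹ : ℝ)) : ℂ) * I)
          Filter.atTop (nhds w.2) := by
        have := ((Complex.continuous_ofReal.tendsto 0).comp h1).mul_const I
        simpa using (tendsto_const_nhds.add this)
      exact Filter.Tendsto.prodMk_nhds tendsto_const_nhds h2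

-- real smul = complex smul of cast
theorem rsmul_eq {n : ℕ} (r : ℝ) (v : EuclideanSpace ℂ (Fin n)) :
    r • v = ((r : ℂ)) • v := by
  rw [show ((r:ℂ)) = r • (1:ℂ) by simp [Complex.real_smul], smul_assoc, one_smul]

theorem backward {n : ℕ}
    (A : EuclideanSpace ℂ (Fin n) × ℂ → EuclideanSpace ℂ (Fin n) × ℂ)
    (ζ₀ : EuclideanSpace ℂ (Fin n)) (x R : ℝ) (hR : 0 < R)
    (U : EuclideanSpace ℂ (Fin n) ≃ₗᵢ[ℂ] EuclideanSpace ℂ (Fin n))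
    (hA : ∀ (ζ : EuclideanSpace ℂ (Fin n)) (z : ℂ),
      A (ζ, z) = (ζ₀ + R • U ζ,
        (R : ℂ) ^ 2 * z + (x : ℂ) + Complex.I * ((‖ζ₀‖ ^ 2 : ℝ) : ℂ)
          + 2 * Complex.I * (inner ℂ ζ₀ (R • U ζ) : ℂ))) :
    ((∃ (L : EuclideanSpace ℂ (Fin n) × ℂ → EuclideanSpace ℂ (Fin n) × ℂ)
        (b : EuclideanSpace ℂ (Fin n) × ℂ),
        IsLinearMap ℂ L ∧ Function.Bijective L ∧ ∀ v, A v = L v + b) ∧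
      A '' SiegelU n = SiegelU n) := by
  have hRc : (R : ℂ) ≠ 0 := by exact_mod_cast hR.ne'
  set L : EuclideanSpace ℂ (Fin n) × ℂ → EuclideanSpace ℂ (Fin n) × ℂ :=
    fun v => ((R : ℂ) • U v.1,
      (R : ℂ) ^ 2 * v.2 + 2 * Complex.I * (inner ℂ ζ₀ ((R : ℂ) • U v.1) : ℂ)) with hLdef
  set b : EuclideanSpace ℂ (Fin n) × ℂ := (ζ₀, (x : ℂ) + Complex.I * ((‖ζ₀‖ ^ 2 : ℝ) : ℂ))
    with hbdef
  have hLlin : IsLinearMap ℂ L := by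
    constructor
    · intro u v
      apply Prod.ext
      · simp [hLdef, smul_add]
      · simp [hLdef, smul_add, inner_add_right]; ring
    · intro c v
      apply Prod.ext
      · simp [hLdef, smul_comm c]
      · show (R:ℂ)^2 * (c • v).2 + 2*Complex.I*(inner ℂ ζ₀ ((R:ℂ) • U ((c • v).1)) : ℂ)
            = c • ((R:ℂ)^2 * v.2 + 2*Complex.I*(inner ℂ ζ₀ ((R:ℂ) • U v.1) : ℂ))
        rw [Prod.smul_fst, Prod.smul_snd, map_smul, smul_comm ((R:ℂ)) c (U v.1),
          inner_smul_right (𝕜 := ℂ)]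
        simp only [smul_eq_mul]
        ring
  set Linv : EuclideanSpace ℂ (Fin n) × ℂ → EuclideanSpace ℂ (Fin n) × ℂ :=
    fun w => ((R : ℂ)⁻¹ • U.symm w.1,
      ((R : ℂ) ^ 2)⁻¹ * (w.2 - 2 * Complex.I * (inner ℂ ζ₀ w.1 : ℂ))) with hLinv
  have hleft : Function.LeftInverse Linv L := by
    intro v
    apply Prod.ext
    · show (R:ℂ)⁻¹ • U.symm ((R:ℂ) • U v.1) = v.1
      rw [map_smul, smul_smul, inv_mul_cancel₀ hRc, one_smul, U.symm_apply_apply]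
    · simp only [hLdef, hLinv]
      field_simp
      ring
  have hright : Function.RightInverse Linv L := by
    intro w
    apply Prod.ext
    · simp [hLdef, hLinv, smul_smul, mul_inv_cancel₀ hRc]
      rw [rsmul_eq, smul_smul, mul_inv_cancel₀ hRc, one_smul]
    · simp only [hLdef, hLinv, LinearIsometryEquiv.map_smul, smul_smul,
        mul_inv_cancel₀ hRc, one_smul, LinearIsometryEquiv.apply_symm_apply]
      field_simp
      ring
  have hbij : Function.Bijective L := Function.bijective_iff_has_inverse.mpr ⟨Linv, hleft, hright⟩
  have hAv : ∀ v, A v = L v + b := by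
    rintro ⟨ζ, z⟩
    rw [hA ζ z]
    apply Prod.ext
    · show ζ₀ + R • U ζ = (R : ℂ) • U ζ + ζ₀
      rw [rsmul_eq, add_comm]
    · show _ = (R : ℂ) ^ 2 * z + 2 * Complex.I * (inner ℂ ζ₀ ((R : ℂ) • U ζ) : ℂ)
        + ((x : ℂ) + Complex.I * ((‖ζ₀‖ ^ 2 : ℝ) : ℂ))
      rw [rsmul_eq]
      ring
  have hmem : ∀ (ζ : EuclideanSpace ℂ (Fin n)) (z : ℂ),
      (A (ζ, z) ∈ SiegelU n ↔ (ζ, z) ∈ SiegelU n) := by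
    intro ζ z
    rw [hA ζ z]
    show ‖ζ₀ + R • U ζ‖ ^ 2 < _ ↔ ‖ζ‖ ^ 2 < z.im
    have hexp : ‖ζ₀ + R • U ζ‖ ^ 2
        = ‖ζ₀‖ ^ 2 + 2 * (inner ℂ ζ₀ (R • U ζ) : ℂ).re + R ^ 2 * ‖ζ‖ ^ 2 := by
      have h1 := norm_add_sq (𝕜 := ℂ) ζ₀ (R • U ζ)
      have h2 : ‖R • U ζ‖ = R * ‖ζ‖ := by
        rw [norm_smul, U.norm_map, Real.norm_eq_abs, abs_of_pos hR]
      rw [h2] at h1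
      simp only [RCLike.re_to_complex] at h1
      rw [h1, mul_pow]
    have him : ((R : ℂ) ^ 2 * z + (x : ℂ) + Complex.I * ((‖ζ₀‖ ^ 2 : ℝ) : ℂ)
        + 2 * Complex.I * (inner ℂ ζ₀ (R • U ζ) : ℂ)).im
        = R ^ 2 * z.im + ‖ζ₀‖ ^ 2 + 2 * (inner ℂ ζ₀ (R • U ζ) : ℂ).re := by
      simp only [Complex.add_im, Complex.mul_im, Complex.mul_re, Complex.I_re,
        Complex.I_im, Complex.ofReal_re, Complex.ofReal_im, ← Complex.ofReal_pow]
      simp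
      try ring
    rw [hexp, him]
    constructor
    · intro h
      have : R ^ 2 * ‖ζ‖ ^ 2 < R ^ 2 * z.im := by linarith
      exact lt_of_mul_lt_mul_left this (by positivity)
    · intro h
      have : R ^ 2 * ‖ζ‖ ^ 2 < R ^ 2 * z.im :=
        mul_lt_mul_of_pos_left h (by positivity)
      linarith
  refine ⟨⟨L, b, hLlin, hbij, hAv⟩, ?_⟩
  ext w
  constructor
  · rintro ⟨v, hv, rfl⟩
    exact (hmem v.1 v.2).mpr (by simpa using hv)
  · intro hw
    refine ⟨Linv (w - b), ?_, ?_⟩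
    · have hAw : A (Linv (w - b)) = w := by
        rw [hAv, hright (w - b), sub_add_cancel]
      have := (hmem (Linv (w - b)).1 (Linv (w - b)).2).mp
      simp only [Prod.mk.eta] at this
      rw [hAw] at this
      exact this hw
    · rw [hAv, hright (w - b), sub_add_cancel]

theorem forward {n : ℕ}
    (A : Ee n × ℂ → Ee n × ℂ)
    (L : Ee n × ℂ →ₗ[ℂ] Ee n × ℂ)
    (hbij : Function.Bijective L)
    (b : Ee n × ℂ) (hA : ∀ v, A v = L v + b)
    (him : A '' SiegelU n = SiegelU n) :
    ∃ (ζ₀ : Ee n) (x : ℝ) (R : ℝ), 0 < R ∧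
      ∃ U : Ee n ≃ₗᵢ[ℂ] Ee n,
        ∀ (ζ : Ee n) (z : ℂ),
          A (ζ, z) = (ζ₀ + R • U ζ,
            (R : ℂ) ^ 2 * z + (x : ℂ) + Complex.I * ((‖ζ₀‖ ^ 2 : ℝ) : ℂ)
              + 2 * Complex.I * (inner ℂ ζ₀ (R • U ζ) : ℂ)) := by
  classical
  set T : Ee n →ₗ[ℂ] Ee n :=
    (LinearMap.fst ℂ (Ee n) ℂ).comp (L.comp (LinearMap.inl ℂ (Ee n) ℂ)) with hTdef
  set β : Ee n →ₗ[ℂ] ℂ :=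
    (LinearMap.snd ℂ (Ee n) ℂ).comp (L.comp (LinearMap.inl ℂ (Ee n) ℂ)) with hβdef
  set α : Ee n := (L (0, 1)).1 with hαdef
  set c : ℂ := (L (0, 1)).2 with hcdef
  -- decomposition of L
  have key : ∀ (ζ : Ee n) (z : ℂ),
      ((ζ, z) : Ee n × ℂ) = ((ζ, 0) : Ee n × ℂ) + z • ((0 : Ee n), (1 : ℂ)) := by
    intro ζ z; apply Prod.ext <;> simp
  have hdec : ∀ (ζ : Ee n) (z : ℂ), L (ζ, z) = (T ζ + z • α, β ζ + z * c) := by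
    intro ζ z
    rw [key ζ z, map_add, map_smul]
    apply Prod.ext
    · rw [Prod.fst_add, Prod.smul_fst]; rfl
    · rw [Prod.snd_add, Prod.smul_snd]; rfl
  -- basic facts about A
  have hAinj : Function.Injective A := by
    intro u v huv
    rw [hA u, hA v] at huv
    exact hbij.1 (by simpa using huv)
  have hAmem : ∀ v ∈ SiegelU n, A v ∈ SiegelU n := by
    intro v hv; rw [← him]; exact Set.mem_image_of_mem A hv
  have hAc : Continuous A := by
    have h1 : Continuous fun v : Ee n × ℂ => L v + b :=
      L.continuous_of_finiteDimensional.add continuous_const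
    exact (funext hA : A = _) ▸ h1
  have hcl : ∀ v : Ee n × ℂ, ‖v.1‖ ^ 2 ≤ v.2.im → ‖(A v).1‖ ^ 2 ≤ (A v).2.im := by
    intro v hv
    have h1 : v ∈ closure (SiegelU n) := by rw [closure_SiegelU]; exact hv
    have h2 : A v ∈ closure (A '' SiegelU n) :=
      image_closure_subset_closure_image hAc ⟨v, h1, rfl⟩
    rw [him, closure_SiegelU] at h2
    exact h2
  have hfr : ∀ v : Ee n × ℂ, ‖v.1‖ ^ 2 = v.2.im → ‖(A v).1‖ ^ 2 = (A v).2.im := by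
    intro v hv
    refine le_antisymm (hcl v hv.le) ?_
    by_contra hlt
    push_neg at hlt
    have hin : A v ∈ SiegelU n := hlt
    rw [← him] at hin
    obtain ⟨u, hu, huv⟩ := hin
    have : u = v := hAinj huv
    subst this
    exact absurd hv (ne_of_lt (show ‖u.1‖ ^ 2 < u.2.im from hu))
  -- the boundary identity
  have hbd : ∀ (ζ : Ee n) (x s : ℝ), s = ‖ζ‖ ^ 2 →
      ‖T ζ + ((x : ℂ) + (s : ℂ) * I) • α + b.1‖ ^ 2
        = (β ζ).im + (x * c.im + s * c.re) + b.2.im := by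
    intro ζ x s hs
    have him2 : ((x : ℂ) + (s : ℂ) * I).im = s := by
      simp [Complex.add_im, Complex.mul_im]
    have hv : ‖(((ζ, (x : ℂ) + (s : ℂ) * I)) : Ee n × ℂ).1‖ ^ 2
        = (((ζ, (x : ℂ) + (s : ℂ) * I)) : Ee n × ℂ).2.im := by
      show ‖ζ‖ ^ 2 = ((x : ℂ) + (s : ℂ) * I).im
      rw [him2, hs]
    have h := hfr _ hv
    rw [hA, hdec] at h
    have h1 : (((T ζ + ((x : ℂ) + (s : ℂ) * I) • α, β ζ + ((x : ℂ) + (s : ℂ) * I) * c))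
        + b : Ee n × ℂ).1 = T ζ + ((x : ℂ) + (s : ℂ) * I) • α + b.1 := rfl
    have h2 : (((T ζ + ((x : ℂ) + (s : ℂ) * I) • α, β ζ + ((x : ℂ) + (s : ℂ) * I) * c))
        + b : Ee n × ℂ).2 = β ζ + ((x : ℂ) + (s : ℂ) * I) * c + b.2 := rfl
    rw [h1, h2] at h
    rw [h, Complex.add_im, Complex.add_im, Complex.mul_im, Complex.add_re, him2]
    simp only [Complex.ofReal_re, Complex.mul_re, Complex.ofReal_im, Complex.I_re,
      Complex.I_im]
    ring
  -- the x-quadratic identity at ζ = 0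
  have hζ0 : ∀ x : ℝ, x ^ 2 * ‖α‖ ^ 2 + 2 * x * (inner ℂ α b.1 : ℂ).re + ‖b.1‖ ^ 2
      = x * c.im + b.2.im := by
    intro x
    have h := hbd 0 x 0 (by simp)
    simp only [map_zero, Complex.zero_im, zero_add, Complex.ofReal_zero, zero_mul, add_zero,
      zero_mul, zero_add] at h
    have hexp : ‖(x : ℂ) • α + b.1‖ ^ 2
        = x ^ 2 * ‖α‖ ^ 2 + 2 * x * (inner ℂ α b.1 : ℂ).re + ‖b.1‖ ^ 2 := by
      have h1 := norm_add_sq (𝕜 := ℂ) ((x : ℂ) • α) b.1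
      have h2 : (inner ℂ ((x : ℂ) • α) b.1 : ℂ) = (x : ℂ) * (inner ℂ α b.1 : ℂ) := by
        rw [inner_smul_left]; simp
      have h3 : ‖(x : ℂ) • α‖ = |x| * ‖α‖ := by
        rw [norm_smul]; simp
      rw [h2, h3] at h1
      simp only [RCLike.re_to_complex] at h1
      rw [h1]
      have h4 : ((x : ℂ) * (inner ℂ α b.1 : ℂ)).re = x * (inner ℂ α b.1 : ℂ).re := by
        simp [Complex.mul_re]
      rw [h4, mul_pow, _root_.sq_abs]
      ring
    rw [hexp] at h
    linarith [h]
  have hα : α = 0 := by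
    have h0 := hζ0 0
    have h1 := hζ0 1
    have h2 := hζ0 (-1)
    have hsq : ‖α‖ ^ 2 = 0 := by nlinarith
    exact norm_eq_zero.mp (pow_eq_zero_iff two_ne_zero |>.mp hsq)
  have hnα : ‖α‖ = 0 := by simp [hα]
  have hiα : (inner ℂ α b.1 : ℂ).re = 0 := by simp [hα]
  have hcim : c.im = 0 := by
    have h0 := hζ0 0
    have h1 := hζ0 1
    rw [hnα, hiα] at h1 h0
    linarith
  -- simplified boundary identity
  have hbd2 : ∀ ζ : Ee n, ‖T ζ + b.1‖ ^ 2 = (β ζ).im + ‖ζ‖ ^ 2 * c.re + b.2.im := by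
    intro ζ
    have h := hbd ζ 0 (‖ζ‖ ^ 2) rfl
    rw [hα, smul_zero, add_zero, hcim] at h
    rw [h]; ring
  have hb2 : b.2.im = ‖b.1‖ ^ 2 := by
    have h := hbd2 0
    simp only [map_zero, Complex.zero_im, norm_zero, zero_add] at h
    rw [show (0:ℝ)^2 * c.re = 0 by ring] at h
    linarith [h]
  -- the scaled identity
  have hsc : ∀ (ζ : Ee n) (t : ℝ),
      t ^ 2 * ‖T ζ‖ ^ 2 + 2 * t * (inner ℂ (T ζ) b.1 : ℂ).re + ‖b.1‖ ^ 2
        = t * (β ζ).im + t ^ 2 * (‖ζ‖ ^ 2 * c.re) + b.2.im := by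
    intro ζ t
    have h := hbd2 ((t : ℂ) • ζ)
    rw [map_smul, map_smul] at h
    have h1 : ‖(t:ℂ) • ζ‖ ^ 2 = t ^ 2 * ‖ζ‖ ^ 2 := by
      rw [norm_smul]; simp [mul_pow, _root_.sq_abs]
    have h2 : ((t:ℂ) • β ζ).im = t * (β ζ).im := by
      simp [smul_eq_mul, Complex.mul_im]
    have h3 : ‖(t:ℂ) • T ζ + b.1‖ ^ 2
        = t ^ 2 * ‖T ζ‖ ^ 2 + 2 * t * (inner ℂ (T ζ) b.1 : ℂ).re + ‖b.1‖ ^ 2 := by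
      have h4 := norm_add_sq (𝕜 := ℂ) ((t : ℂ) • T ζ) b.1
      have h5 : (inner ℂ ((t : ℂ) • T ζ) b.1 : ℂ) = (t : ℂ) * (inner ℂ (T ζ) b.1 : ℂ) := by
        rw [inner_smul_left]; simp
      have h6 : ‖(t : ℂ) • T ζ‖ = |t| * ‖T ζ‖ := by rw [norm_smul]; simp
      rw [h5, h6] at h4
      simp only [RCLike.re_to_complex] at h4
      rw [h4]
      have h7 : ((t : ℂ) * (inner ℂ (T ζ) b.1 : ℂ)).re = t * (inner ℂ (T ζ) b.1 : ℂ).re := by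
        simp [Complex.mul_re]
      rw [h7, mul_pow, _root_.sq_abs]
      ring
    rw [h3, h1, h2] at h
    rw [h]; ring
  have hTnormsq : ∀ ζ : Ee n, ‖T ζ‖ ^ 2 = ‖ζ‖ ^ 2 * c.re := by
    intro ζ
    have h1 := hsc ζ 1
    have h2 := hsc ζ (-1)
    linarith
  have hre : ∀ ζ : Ee n, 2 * (inner ℂ (T ζ) b.1 : ℂ).re = (β ζ).im := by
    intro ζ
    have h1 := hsc ζ 1
    have h2 := hsc ζ (-1)
    linarith
  have him' : ∀ ζ : Ee n, 2 * (inner ℂ (T ζ) b.1 : ℂ).im = (β ζ).re := by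
    intro ζ
    have h := hre (I • ζ)
    rw [map_smul, map_smul] at h
    have h1 : (inner ℂ (I • T ζ) b.1 : ℂ) = - I * (inner ℂ (T ζ) b.1 : ℂ) := by
      rw [inner_smul_left]; simp
    have h2 : ((I : ℂ) • β ζ).im = (β ζ).re := by
      simp [smul_eq_mul, Complex.mul_im]
    rw [h1, h2] at h
    have h3 : ((-I) * (inner ℂ (T ζ) b.1 : ℂ)).re = (inner ℂ (T ζ) b.1 : ℂ).im := by
      simp [Complex.mul_re]
    rw [h3] at h
    exact h
  have hβ : ∀ ζ : Ee n, β ζ = 2 * I * (inner ℂ b.1 (T ζ) : ℂ) := by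
    intro ζ
    have h1 := hre ζ
    have h2 := him' ζ
    have hconj : (inner ℂ b.1 (T ζ) : ℂ) = (starRingEnd ℂ) (inner ℂ (T ζ) b.1 : ℂ) :=
      (inner_conj_symm _ _).symm
    rw [hconj]
    generalize (inner ℂ (T ζ) b.1 : ℂ) = w at h1 h2 ⊢
    apply Complex.ext
    · simp only [Complex.mul_re, Complex.mul_im, Complex.conj_re, Complex.conj_im,
        Complex.I_re, Complex.I_im, Complex.re_ofNat, Complex.im_ofNat]
      linarith
    · simp only [Complex.mul_re, Complex.mul_im, Complex.conj_re, Complex.conj_im,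
        Complex.I_re, Complex.I_im, Complex.re_ofNat, Complex.im_ofNat]
      linarith
  -- positivity of c.re
  have hcre : 0 < c.re := by
    have h0 : ((0 : Ee n), I) ∈ SiegelU n := by
      show ‖(0 : Ee n)‖ ^ 2 < I.im
      simp
    have h1 := hAmem _ h0
    rw [hA, hdec] at h1
    have h2 : ‖T 0 + I • α + b.1‖ ^ 2 < (β 0 + I * c + b.2).im := h1
    simp only [map_zero, hα, smul_zero, zero_add, add_zero] at h2
    have h3 : ((I * c + b.2)).im = c.re + b.2.im := by
      rw [Complex.add_im, Complex.mul_im]; simp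
    rw [h3, hb2] at h2
    linarith
  set R : ℝ := Real.sqrt c.re with hRdef
  have hR : 0 < R := Real.sqrt_pos.mpr hcre
  have hR2 : R ^ 2 = c.re := Real.sq_sqrt hcre.le
  have hRc : (R : ℂ) ≠ 0 := by exact_mod_cast hR.ne'
  have hTnorm : ∀ ζ : Ee n, ‖T ζ‖ = R * ‖ζ‖ := by
    intro ζ
    have h1 : ‖T ζ‖ ^ 2 = (R * ‖ζ‖) ^ 2 := by rw [hTnormsq, mul_pow, hR2]; ring
    have h2 : (0:ℝ) ≤ R * ‖ζ‖ := by positivity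
    calc ‖T ζ‖ = Real.sqrt (‖T ζ‖ ^ 2) := (Real.sqrt_sq (norm_nonneg _)).symm
      _ = Real.sqrt ((R * ‖ζ‖) ^ 2) := by rw [h1]
      _ = R * ‖ζ‖ := Real.sqrt_sq h2
  have hTiso_norm : ∀ ζ : Ee n, ‖(R : ℂ)⁻¹ • T ζ‖ = ‖ζ‖ := by
    intro ζ
    rw [norm_smul, hTnorm]
    have hn1 : ‖(R : ℂ)⁻¹‖ = R⁻¹ := by
      rw [norm_inv, Complex.norm_real, Real.norm_eq_abs, abs_of_pos hR]
    rw [hn1]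
    field_simp
  set Tiso : Ee n →ₗᵢ[ℂ] Ee n :=
    { toLinearMap := ((R : ℂ)⁻¹) • T
      norm_map' := fun ζ => hTiso_norm ζ } with hTiso
  have hTsurj : Function.Surjective T := by
    intro w
    obtain ⟨v, hv⟩ := hbij.2 ((w, 0) : Ee n × ℂ)
    refine ⟨v.1, ?_⟩
    have h1 : L (v.1, v.2) = (w, 0) := by rw [Prod.mk.eta]; exact hv
    rw [hdec] at h1
    have h2 : T v.1 + v.2 • α = w := congrArg Prod.fst h1
    rw [hα, smul_zero, add_zero] at h2
    exact h2
  have hsurj : Function.Surjective Tiso := by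
    intro w
    obtain ⟨ζ, hζ⟩ := hTsurj ((R : ℂ) • w)
    refine ⟨ζ, ?_⟩
    show (R : ℂ)⁻¹ • T ζ = w
    rw [hζ, smul_smul, inv_mul_cancel₀ hRc, one_smul]
  set U : Ee n ≃ₗᵢ[ℂ] Ee n := LinearIsometryEquiv.ofSurjective Tiso hsurj with hUdef
  have hU : ∀ ζ : Ee n, U ζ = (R : ℂ)⁻¹ • T ζ := by
    intro ζ
    have h := congrFun (LinearIsometryEquiv.coe_ofSurjective Tiso hsurj) ζ
    exact h
  have hRU : ∀ ζ : Ee n, R • U ζ = T ζ := by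
    intro ζ
    rw [hU, rsmul_eq, smul_smul, mul_inv_cancel₀ hRc, one_smul]
  -- final assembly
  refine ⟨b.1, b.2.re, R, hR, U, ?_⟩
  intro ζ z
  have hc : c = ((c.re : ℝ) : ℂ) := by
    apply Complex.ext <;> simp [hcim]
  have hb2' : b.2 = ((b.2.re : ℝ) : ℂ) + I * ((‖b.1‖ ^ 2 : ℝ) : ℂ) := by
    apply Complex.ext
    · simp [Complex.add_re, Complex.mul_re, ← Complex.ofReal_pow]
    · simp [Complex.add_im, Complex.mul_im, ← Complex.ofReal_pow, hb2]
  have hR2c : ((R : ℂ)) ^ 2 = ((c.re : ℝ) : ℂ) := by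
    rw [← hR2]; push_cast; ring
  rw [hA, hdec, hα, smul_zero, add_zero]
  apply Prod.ext
  · show T ζ + b.1 = b.1 + R • U ζ
    rw [hRU, add_comm]
  · show β ζ + z * c + b.2
        = (R:ℂ) ^ 2 * z + ((b.2.re : ℝ) : ℂ) + I * ((‖b.1‖ ^ 2 : ℝ) : ℂ)
          + 2 * I * (inner ℂ b.1 (R • U ζ) : ℂ)
    rw [hRU, hβ ζ, hR2c]
    linear_combination z * hc + hb2'

/-- classification of the affine automorphisms of the Siegel
upper half-space: they are exactly the compositions of Heisenberg translations
and linear automorphisms. Here `⟨a|b⟩` (linear in the first variable) is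
`inner b a` in Mathlib's convention. -/
theorem stmt_6 (n : ℕ)
    (A : EuclideanSpace ℂ (Fin n) × ℂ → EuclideanSpace ℂ (Fin n) × ℂ) :
    ((∃ (L : EuclideanSpace ℂ (Fin n) × ℂ → EuclideanSpace ℂ (Fin n) × ℂ)
        (b : EuclideanSpace ℂ (Fin n) × ℂ),
        IsLinearMap ℂ L ∧ Function.Bijective L ∧ ∀ v, A v = L v + b) ∧
      A '' SiegelU n = SiegelU n) ↔
      ∃ (ζ₀ : EuclideanSpace ℂ (Fin n)) (x : ℝ) (R : ℝ), 0 < R ∧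
        ∃ U : EuclideanSpace ℂ (Fin n) ≃ₗᵢ[ℂ] EuclideanSpace ℂ (Fin n),
          ∀ (ζ : EuclideanSpace ℂ (Fin n)) (z : ℂ),
            A (ζ, z) = (ζ₀ + R • U ζ,
              (R : ℂ) ^ 2 * z + (x : ℂ) + Complex.I * ((‖ζ₀‖ ^ 2 : ℝ) : ℂ)
                + 2 * Complex.I * (inner ℂ ζ₀ (R • U ζ) : ℂ)) := by
  constructor
  · rintro ⟨⟨L, b, hlin, hbij, hAv⟩, him⟩
    exact forward A (IsLinearMap.mk' L hlin) hbij b hAv him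
  · rintro ⟨ζ₀, x, R, hR, U, hA⟩
    exact backward A ζ₀ x R hR U hA
end
end

section
/- Let X be a complete seminormed complex vector space, let Y be a Fréchet space (a complete, metrizable, locally convex topological ℂ-vector space), and let j : X → Y be an injective linear map. Let G be a group of linear homeomorphisms of Y such that each g ∈ G maps j(X) onto j(X) and the induced linear map on X is continuous. Then the following are equivalent: (i) there exists a continuous linear functional L on Y such that L ∘ j is a nonzero continuous linear functional on X; (ii) there exists a closed linear subspace V of Y with g(V) = V for every g ∈ G, such that the map X → Y/V, x ↦ j(x) + V (where Y/V carries the quotient topology), is continuous and not identically zero. -/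
noncomputable section

open Topology

open Filter Metric Set Uniformity Pointwise

section ClosedGraphAux

variable {E : Type*} [SeminormedAddCommGroup E] [NormedSpace ℂ E] [CompleteSpace E]
variable {F : Type*} [AddCommGroup F] [Module ℂ F] [TopologicalSpace F]
  [IsTopologicalAddGroup F] [ContinuousSMul ℂ F]

/-- Baire category step: preimage closures of neighborhoods of 0 are neighborhoods of 0. -/
theorem aux_closure_preimage_nhds (f : E →ₗ[ℂ] F) {U : Set F} (hU : U ∈ 𝓝 (0 : F)) :
    ∃ δ > 0, Metric.ball (0 : E) δ ⊆ closure (f ⁻¹' U) := by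
  obtain ⟨W, hW, hWU⟩ := exists_nhds_zero_half hU
  have hnegW : (fun y : F => -y) ⁻¹' W ∈ 𝓝 (0 : F) :=
    (continuous_neg.tendsto' (0 : F) 0 neg_zero) hW
  set W' : Set F := W ∩ (fun y : F => -y) ⁻¹' W with hW'def
  have hW' : W' ∈ 𝓝 (0 : F) := inter_mem hW hnegW
  set C : Set E := closure (f ⁻¹' W') with hCdef
  have hc : ∀ n : ℕ, ((n : ℂ) + 1) ≠ 0 := by
    intro n
    have : ((n : ℂ) + 1) = ((n + 1 : ℕ) : ℂ) := by push_cast; ring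
    rw [this]
    exact Nat.cast_ne_zero.mpr (Nat.succ_ne_zero n)
  have hcover : (⋃ n : ℕ, ((n : ℂ) + 1) • C) = univ := by
    refine eq_univ_of_forall fun x => ?_
    have htend : Tendsto (fun n : ℕ => ((n : ℂ) + 1)⁻¹ • f x) atTop (𝓝 ((0 : ℂ) • f x)) := by
      refine Tendsto.smul_const ?_ (f x)
      rw [tendsto_zero_iff_norm_tendsto_zero]
      have : (fun n : ℕ => ‖((n : ℂ) + 1)⁻¹‖) = fun n : ℕ => 1 / ((n : ℝ) + 1) := by
        funext n
        rw [norm_inv]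
        have : ((n : ℂ) + 1) = ((n + 1 : ℕ) : ℂ) := by push_cast; ring
        rw [this, Complex.norm_natCast]
        push_cast; ring
      rw [this]
      exact tendsto_one_div_add_atTop_nhds_zero_nat
    rw [zero_smul] at htend
    have : ∀ᶠ n : ℕ in atTop, ((n : ℂ) + 1)⁻¹ • f x ∈ W' := htend.eventually_mem hW'
    obtain ⟨n, hn⟩ := this.exists
    refine mem_iUnion.mpr ⟨n, ?_⟩
    have hmem : ((n : ℂ) + 1)⁻¹ • x ∈ C := by
      apply subset_closure
      simp only [Set.mem_preimage, map_smul]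
      exact hn
    have := Set.smul_mem_smul_set (a := ((n : ℂ) + 1)) hmem
    rwa [smul_inv_smul₀ (hc n)] at this
  have hclosed : ∀ n : ℕ, IsClosed (((n : ℂ) + 1) • C) := by
    intro n
    have := (Homeomorph.smulOfNeZero ((n : ℂ) + 1) (hc n) (α := E)).isClosedMap C
      isClosed_closure
    simpa [Set.image_smul] using this
  haveI : Nonempty E := ⟨0⟩
  obtain ⟨n, hn⟩ := nonempty_interior_of_iUnion_of_closed hclosed hcover
  rw [interior_smul₀ (hc n)] at hn
  obtain ⟨y, hy⟩ := hn
  obtain ⟨z, hz, rfl⟩ := hy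
  obtain ⟨r, hrpos, hball⟩ := Metric.isOpen_iff.mp isOpen_interior z hz
  refine ⟨r, hrpos, fun e he => ?_⟩
  rw [mem_ball_zero_iff] at he
  have hze : z + e ∈ C := interior_subset (hball (by
    rw [Metric.mem_ball, dist_self_add_left]
    exact he))
  have hzC : z ∈ C := interior_subset hz
  have key : (z + e) - z ∈ closure (f ⁻¹' U) := by
    refine map_mem_closure₂ continuous_sub hze hzC ?_
    intro a ha b hb
    simp only [Set.mem_preimage, map_sub]
    rw [sub_eq_add_neg]
    exact hWU _ ha.1 _ hb.2
  simpa using key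

/-- Closed graph theorem, sequential form, for maps from a complete seminormed space to a
first-countable complete topological vector group. -/
theorem aux_closed_graph (f : E →ₗ[ℂ] F) [FirstCountableTopology F]
    (hcomp : @CompleteSpace F (IsTopologicalAddGroup.rightUniformSpace F))
    (hseq : ∀ (t : ℕ → E) (x : E) (y : F), Tendsto t atTop (𝓝 x) →
      Tendsto (fun n => f (t n)) atTop (𝓝 y) → y = f x) :
    Continuous f := by
  have key : ∀ U ∈ 𝓝 (0 : F), ∃ δ > 0, ∀ x : E, ‖x‖ < δ → f x ∈ U := by
    intro U hU
    obtain ⟨V₁, hV₁, hV₁U⟩ := exists_nhds_zero_half hU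
    set V₂ : Set F := V₁ ∩ (fun y : F => -y) ⁻¹' V₁ with hV₂def
    have hV₂ : V₂ ∈ 𝓝 (0 : F) :=
      inter_mem hV₁ ((continuous_neg.tendsto' (0 : F) 0 neg_zero) hV₁)
    obtain ⟨u, hu, hu2⟩ := IsTopologicalAddGroup.exists_antitone_basis_nhds_zero F
    obtain ⟨m₀, -, hm₀⟩ := hu.1.mem_iff.mp hV₂
    set w : ℕ → Set F := fun n => u (m₀ + n) ∩ (fun y : F => -y) ⁻¹' u (m₀ + n) with hwdef
    have humem : ∀ k, u k ∈ 𝓝 (0 : F) := fun k => hu.1.mem_of_mem trivial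
    have hwnhds : ∀ n, w n ∈ 𝓝 (0 : F) := fun n =>
      inter_mem (humem _) ((continuous_neg.tendsto' (0 : F) 0 neg_zero) (humem _))
    have hwzero : ∀ n, (0 : F) ∈ w n := fun n => mem_of_mem_nhds (hwnhds n)
    have hwsymm : ∀ n, ∀ y ∈ w n, -y ∈ w n := by
      intro n y hy
      exact ⟨hy.2, by simpa using hy.1⟩
    have hwadd : ∀ n, ∀ a ∈ w (n + 1), ∀ b ∈ w (n + 1), a + b ∈ w n := by
      intro n a ha b hb
      constructor
      · exact hu2 (m₀ + n) (Set.add_mem_add ha.1 hb.1)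
      · show -(a + b) ∈ u (m₀ + n)
        rw [neg_add]
        exact hu2 (m₀ + n) (Set.add_mem_add ha.2 hb.2)
    have hwanti : ∀ {m n : ℕ}, m ≤ n → w n ⊆ w m := by
      intro m n hmn y hy
      exact ⟨hu.2 (by omega) hy.1, hu.2 (by omega : m₀ + m ≤ m₀ + n) hy.2⟩
    have hwV₂ : w 0 ⊆ V₂ := fun y hy => hm₀ hy.1
    have hδex : ∀ n : ℕ, ∃ δ > 0, Metric.ball (0 : E) δ ⊆ closure (f ⁻¹' w (n + 1)) :=
      fun n => aux_closure_preimage_nhds f (hwnhds (n + 1))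
    choose δ δpos hδball using hδex
    set δ' : ℕ → ℝ := fun n => min (δ n) ((1 / 2 : ℝ) ^ n) with hδ'def
    have δ'pos : ∀ n, 0 < δ' n := fun n => lt_min (δpos n) (by positivity)
    refine ⟨δ' 0, δ'pos 0, fun x hx => ?_⟩
    have hstep : ∀ (n : ℕ) (r : E), ‖r‖ < δ' n →
        ∃ a : E, f a ∈ w (n + 1) ∧ ‖r - a‖ < δ' (n + 1) := by
      intro n r hr
      have hrC : r ∈ closure (f ⁻¹' w (n + 1)) := by
        apply hδball n
        rw [mem_ball_zero_iff]
        exact lt_of_lt_of_le hr (min_le_left _ _)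
      rw [Metric.mem_closure_iff] at hrC
      obtain ⟨a, haW, hd⟩ := hrC (δ' (n + 1)) (δ'pos (n + 1))
      exact ⟨a, haW, by rwa [dist_eq_norm] at hd⟩
    classical
    set step : ℕ → E → E := fun n r =>
      if h : ‖r‖ < δ' n then Classical.choose (hstep n r h) else 0 with hstepdef
    set r : ℕ → E := fun n => Nat.rec x (fun n rn => rn - step n rn) n with hrdef
    have hrsucc : ∀ n, r (n + 1) = r n - step n (r n) := fun n => rfl
    have hrnorm : ∀ n, ‖r n‖ < δ' n := by
      intro n
      induction n with
      | zero => exact hx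
      | succ n ih =>
        rw [hrsucc]
        simp only [hstepdef, dif_pos ih]
        exact (Classical.choose_spec (hstep n (r n) ih)).2
    have hfstep : ∀ n, f (step n (r n)) ∈ w (n + 1) := by
      intro n
      simp only [hstepdef, dif_pos (hrnorm n)]
      exact (Classical.choose_spec (hstep n (r n) (hrnorm n))).1
    set t : ℕ → E := fun n => x - r n with htdef
    set s : ℕ → F := fun n => f (t n) with hsdef
    have htx : Tendsto t atTop (𝓝 x) := by
      have hr0 : Tendsto r atTop (𝓝 0) := by
        apply squeeze_zero_norm (fun n => (hrnorm n).le.trans (min_le_right _ _))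
        exact tendsto_pow_atTop_nhds_zero_of_lt_one (by norm_num) (by norm_num)
      have := tendsto_const_nhds.sub hr0 (α := ℕ) (f := fun _ : ℕ => x) (l := atTop)
      simpa using this
    have hsdiff : ∀ n, s (n + 1) - s n ∈ w (n + 1) := by
      intro n
      have h1 : t (n + 1) - t n = step n (r n) := by
        simp only [htdef, hrsucc n]
        abel
      have : s (n + 1) - s n = f (t (n + 1) - t n) := by rw [map_sub]
      rw [this, h1]
      exact hfstep n
    have hchain : ∀ (m N : ℕ), s (N + m) - s N ∈ w N := by
      intro m
      induction m with
      | zero => intro N; simpa using hwzero N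
      | succ m ih =>
        intro N
        have h1 : s (N + 1) - s N ∈ w (N + 1) := hsdiff N
        have h2 : s ((N + 1) + m) - s (N + 1) ∈ w (N + 1) := ih (N + 1)
        have heq : s (N + (m + 1)) - s N =
            (s ((N + 1) + m) - s (N + 1)) + (s (N + 1) - s N) := by
          rw [show N + (m + 1) = (N + 1) + m by omega]
          abel
        rw [heq]
        exact hwadd N _ h2 _ h1
    letI : UniformSpace F := IsTopologicalAddGroup.rightUniformSpace F
    haveI : CompleteSpace F := hcomp
    have hcauchy : CauchySeq s := by
      apply cauchySeq_of_controlled (fun N => {p : F × F | p.2 - p.1 ∈ w N})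
      · intro ent hent
        have h𝓤 : 𝓤 F = Filter.comap (fun p : F × F => p.2 - p.1) (𝓝 0) := by
          simp_rw [sub_eq_add_neg]; rfl
        rw [h𝓤, Filter.mem_comap] at hent
        obtain ⟨T, hT, hTent⟩ := hent
        obtain ⟨i, -, hi⟩ := hu.1.mem_iff.mp hT
        refine ⟨i, fun p hp => hTent ?_⟩
        exact hi (hu.2 (Nat.le_add_left i m₀) hp.1)
      · intro N m n hNm hNn
        show s n - s m ∈ w N
        rcases le_total m n with h | h
        · have := hchain (n - m) m
          rw [Nat.add_sub_cancel' h] at this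
          exact hwanti hNm this
        · have := hchain (m - n) n
          rw [Nat.add_sub_cancel' h] at this
          have := hwsymm n _ this
          rw [neg_sub] at this
          exact hwanti hNn this
    obtain ⟨y, hy⟩ := cauchySeq_tendsto_of_complete hcauchy
    have hyfx : y = f x := hseq t x y htx hy
    have hsmem : ∀ n, s n ∈ w 0 := by
      intro n
      have h0 := hchain n 0
      have hs0 : s 0 = 0 := by
        simp only [hsdef, htdef]
        show f (x - r 0) = 0
        have : r 0 = x := rfl
        rw [this, sub_self, map_zero]
      rw [Nat.zero_add, hs0, sub_zero] at h0
      exact h0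
    have hyW : y ∈ closure (w 0) := mem_closure_of_tendsto hy (Eventually.of_forall hsmem)
    rw [mem_closure_iff_nhds] at hyW
    have hT : (fun z : F => y + z) '' V₂ ∈ 𝓝 y := by
      have hmap := (Homeomorph.addLeft y (G := F)).map_nhds_eq 0
      have : (fun z : F => y + z) '' V₂ ∈ Filter.map (fun z : F => y + z) (𝓝 (0 : F)) :=
        Filter.image_mem_map hV₂
      rw [show Filter.map (fun z : F => y + z) (𝓝 (0:F)) =
        Filter.map (Homeomorph.addLeft y) (𝓝 (0:F)) from rfl, hmap] at this
      simpa using this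
    obtain ⟨z, hzT, hzw⟩ := hyW _ hT
    obtain ⟨v, hv, rfl⟩ := hzT
    have hyval : y = (y + v) + (-v) := by abel
    have hmem : (y + v) + (-v) ∈ U := by
      apply hV₁U
      · exact (hwV₂ hzw).1
      · exact hv.2
    rw [← hyfx, hyval]
    exact hmem
  have hat : ContinuousAt f 0 := by
    rw [ContinuousAt, map_zero]
    intro U hU
    obtain ⟨δ, hδpos, hδ⟩ := key U hU
    rw [Filter.mem_map]
    refine Filter.mem_of_superset (Metric.ball_mem_nhds 0 hδpos) ?_
    intro x hx
    exact hδ x (mem_ball_zero_iff.mp hx)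
  exact continuous_of_continuousAt_zero f hat

end ClosedGraphAux


/-- characterization of `Y`-decency. `X` is a complete seminormed
space, `Y` a Fréchet space, `j : X → Y` an injective linear map, and `G` a group
of linear homeomorphisms of `Y` preserving `j(X)` and inducing continuous maps
on `X`. -/
theorem stmt_17
    (X : Type*) [SeminormedAddCommGroup X] [NormedSpace ℂ X] [CompleteSpace X]
    (Y : Type*) [AddCommGroup Y] [Module ℂ Y] [UniformSpace Y] [IsUniformAddGroup Y]
    [ContinuousSMul ℂ Y] [CompleteSpace Y] [TopologicalSpace.MetrizableSpace Y]
    [Module ℝ Y] [IsScalarTower ℝ ℂ Y] [LocallyConvexSpace ℝ Y]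
    (j : X →ₗ[ℂ] Y) (hj : Function.Injective j)
    (G : Subgroup (Y ≃L[ℂ] Y))
    (hG1 : ∀ g ∈ G, (g : Y ≃L[ℂ] Y) '' Set.range j = Set.range j)
    (hG2 : ∀ g ∈ G, ∃ C : ℝ, 0 < C ∧ ∀ x x' : X, j x' = (g : Y ≃L[ℂ] Y) (j x) →
      ‖x'‖ ≤ C * ‖x‖) :
    (∃ L : Y →L[ℂ] ℂ,
        (∃ C : ℝ, ∀ x : X, ‖L (j x)‖ ≤ C * ‖x‖) ∧ ∃ x : X, L (j x) ≠ 0) ↔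
      (∃ V : Submodule ℂ Y, IsClosed (V : Set Y) ∧
        (∀ g ∈ G, (g : Y ≃L[ℂ] Y) '' (V : Set Y) = (V : Set Y)) ∧
        Continuous (fun x : X => (Submodule.Quotient.mk (j x) : Y ⧸ V)) ∧
        ∃ x : X, (Submodule.Quotient.mk (j x) : Y ⧸ V) ≠ 0) := by
  constructor
  · -- forward direction: use V = ⋂_{g ∈ G} ker (L ∘ g) and the closed graph theorem
    rintro ⟨L, ⟨C₀, hC₀⟩, x₀, hx₀⟩
    set V : Submodule ℂ Y :=
      { carrier := {y : Y | ∀ g ∈ G, L ((g : Y ≃L[ℂ] Y) y) = 0}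
        add_mem' := by
          intro a b ha hb g hg
          rw [map_add, map_add, ha g hg, hb g hg, add_zero]
        zero_mem' := by intro g hg; simp
        smul_mem' := by
          intro c y hy g hg
          rw [map_smul, map_smul, smul_eq_mul, hy g hg, mul_zero] } with hVdef
    have hVmem : ∀ y : Y, y ∈ V ↔ ∀ g ∈ G, L ((g : Y ≃L[ℂ] Y) y) = 0 := fun y => Iff.rfl
    have hVclosed : IsClosed (V : Set Y) := by
      have heq : (V : Set Y) =
          ⋂ (g : Y ≃L[ℂ] Y) (_ : g ∈ G), (fun y => L (g y)) ⁻¹' {(0 : ℂ)} := by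
        ext y
        simp only [Set.mem_iInter, Set.mem_preimage, Set.mem_singleton_iff, SetLike.mem_coe]
        exact hVmem y
      rw [heq]
      exact isClosed_iInter fun g => isClosed_iInter fun _ =>
        IsClosed.preimage (L.continuous.comp g.continuous) isClosed_singleton
    have hmul : ∀ (g g' : G) (y : Y),
        ((g : Y ≃L[ℂ] Y)) (((g' : Y ≃L[ℂ] Y)) y) = (((g * g' : G) : Y ≃L[ℂ] Y)) y :=
      fun g g' y => rfl
    have hVinv : ∀ g ∈ G, (g : Y ≃L[ℂ] Y) '' (V : Set Y) = (V : Set Y) := by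
      intro g hg
      apply Set.Subset.antisymm
      · rintro _ ⟨y, hy, rfl⟩
        rw [SetLike.mem_coe, hVmem]
        intro g' hg'
        rw [hmul ⟨g', hg'⟩ ⟨g, hg⟩ y]
        exact (hVmem y).mp hy _ (SetLike.coe_mem _)
      · intro y hy
        refine ⟨(g : Y ≃L[ℂ] Y).symm y, ?_, (g : Y ≃L[ℂ] Y).apply_symm_apply y⟩
        rw [SetLike.mem_coe, hVmem]
        intro g' hg'
        have hsymm : (g : Y ≃L[ℂ] Y).symm = (((⟨g, hg⟩ : G)⁻¹ : G) : Y ≃L[ℂ] Y) := rfl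
        rw [hsymm, hmul ⟨g', hg'⟩ (⟨g, hg⟩ : G)⁻¹ y]
        exact (hVmem y).mp hy _ (SetLike.coe_mem _)
    -- bounded linear functionals x ↦ L (g (j x))
    have hcont2 : ∀ g ∈ G, ∃ lin : X →ₗ[ℂ] ℂ,
        (∀ x : X, lin x = L ((g : Y ≃L[ℂ] Y) (j x))) ∧ Continuous lin := by
      intro g hg
      obtain ⟨Cg, hCgpos, hCg⟩ := hG2 g hg
      refine ⟨(L.toLinearMap.comp ((g : Y ≃L[ℂ] Y) : Y →ₗ[ℂ] Y)).comp j, fun x => rfl, ?_⟩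
      set lin : X →ₗ[ℂ] ℂ := (L.toLinearMap.comp ((g : Y ≃L[ℂ] Y) : Y →ₗ[ℂ] Y)).comp j
        with hlin
      have hbound : ∀ x : X, ‖lin x‖ ≤ (max C₀ 0 * Cg) * ‖x‖ := by
        intro x
        have hrange : (g : Y ≃L[ℂ] Y) (j x) ∈ Set.range j := by
          rw [← hG1 g hg]
          exact ⟨j x, ⟨x, rfl⟩, rfl⟩
        obtain ⟨x', hx'⟩ := hrange
        have h1 : ‖x'‖ ≤ Cg * ‖x‖ := hCg x x' hx'
        have h2 : lin x = L (j x') := by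
          have : lin x = L ((g : Y ≃L[ℂ] Y) (j x)) := rfl
          rw [this, ← hx']
        rw [h2]
        calc ‖L (j x')‖ ≤ C₀ * ‖x'‖ := hC₀ x'
          _ ≤ max C₀ 0 * ‖x'‖ :=
            mul_le_mul_of_nonneg_right (le_max_left _ _) (norm_nonneg _)
          _ ≤ max C₀ 0 * (Cg * ‖x‖) := mul_le_mul_of_nonneg_left h1 (le_max_right _ _)
          _ = (max C₀ 0 * Cg) * ‖x‖ := by ring
      exact (lin.mkContinuous _ hbound).continuous
    haveI : FirstCountableTopology (Y ⧸ V) :=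
      inferInstanceAs (FirstCountableTopology (Y ⧸ V.toAddSubgroup))
    have hcomp : @CompleteSpace (Y ⧸ V) (IsTopologicalAddGroup.rightUniformSpace (Y ⧸ V)) :=
      QuotientAddGroup.completeSpace_right Y V.toAddSubgroup
    set flin : X →ₗ[ℂ] Y ⧸ V := V.mkQ.comp j with hflin
    have hflincont : Continuous flin := by
      apply aux_closed_graph flin hcomp
      intro t x y htx hty
      obtain ⟨wit, hwit⟩ := Submodule.Quotient.mk_surjective V y
      have hkey : ∀ g ∈ G, L ((g : Y ≃L[ℂ] Y) (wit - j x)) = 0 := by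
        intro g hg
        obtain ⟨lin, hlineq, hlincont⟩ := hcont2 g hg
        have hle : V ≤ LinearMap.ker (L.toLinearMap.comp ((g : Y ≃L[ℂ] Y) : Y →ₗ[ℂ] Y)) := by
          intro v hv
          rw [LinearMap.mem_ker]
          exact (hVmem v).mp hv g hg
        set ell : Y ⧸ V →ₗ[ℂ] ℂ := V.liftQ _ hle with hell
        have hellmk : ∀ z : Y, ell (Submodule.Quotient.mk z) = L ((g : Y ≃L[ℂ] Y) z) :=
          fun z => rfl
        have hellcont : Continuous ell := by
          rw [(V.isOpenQuotientMap_mkQ).isQuotientMap.continuous_iff]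
          have : (⇑ell ∘ ⇑V.mkQ) = fun z : Y => L ((g : Y ≃L[ℂ] Y) z) := by
            funext z
            exact hellmk z
          rw [this]
          exact L.continuous.comp (g : Y ≃L[ℂ] Y).continuous
        have h1 : Tendsto (fun n => ell (flin (t n))) atTop (𝓝 (ell y)) :=
          (hellcont.tendsto y).comp hty
        have h2 : Tendsto (fun n => lin (t n)) atTop (𝓝 (lin x)) :=
          (hlincont.tendsto x).comp htx
        have heqf : (fun n => ell (flin (t n))) = fun n => lin (t n) := by
          funext n
          rw [hlineq]
          exact hellmk (j (t n))
        rw [heqf] at h1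
        have huniq : ell y = lin x := tendsto_nhds_unique h1 h2
        have hLwit : L ((g : Y ≃L[ℂ] Y) wit) = L ((g : Y ≃L[ℂ] Y) (j x)) := by
          rw [← hellmk wit, hwit, huniq, hlineq]
        rw [map_sub, map_sub, hLwit, sub_self]
      rw [← hwit]
      show Submodule.Quotient.mk wit = Submodule.Quotient.mk (j x)
      rw [Submodule.Quotient.eq]
      exact fun g hg => hkey g hg
    refine ⟨V, hVclosed, hVinv, hflincont, ⟨x₀, ?_⟩⟩
    intro h
    rw [Submodule.Quotient.mk_eq_zero] at h
    have h1 := (hVmem (j x₀)).mp h 1 (one_mem G)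
    exact hx₀ h1
  · -- reverse direction: Hahn–Banach separation
    rintro ⟨V, hVclosed, hGV, hcont, x₀, hx₀⟩
    have hjx₀ : j x₀ ∉ V := by
      intro h
      exact hx₀ ((Submodule.Quotient.mk_eq_zero V).mpr h)
    haveI : IsTopologicalAddGroup Y := inferInstance
    have hconv : Convex ℝ (V : Set Y) := by
      have := (V.restrictScalars ℝ).convex
      rwa [Submodule.coe_restrictScalars] at this
    obtain ⟨f, u, hfx₀, hfV⟩ :=
      RCLike.geometric_hahn_banach_point_closed (𝕜 := ℂ) hconv hVclosed hjx₀
    have hu0 : u < 0 := by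
      have := hfV 0 (Submodule.zero_mem V)
      simpa using this
    have hfV0 : ∀ v ∈ V, f v = 0 := by
      intro v hv
      by_contra hne
      have hsm : (((u : ℂ) - 1) / f v) • v ∈ V := Submodule.smul_mem V _ hv
      have := hfV _ hsm
      rw [map_smul, smul_eq_mul, div_mul_cancel₀ _ hne] at this
      have hre : RCLike.re ((u : ℂ) - 1) = u - 1 := by
        simp [RCLike.ofReal_re]
      rw [hre] at this
      linarith
    have hfx₀ne : f (j x₀) ≠ 0 := by
      intro h
      rw [h] at hfx₀
      simp only [map_zero] at hfx₀
      linarith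
    have hle : V ≤ LinearMap.ker (f : Y →ₗ[ℂ] ℂ) := by
      intro v hv
      rw [LinearMap.mem_ker]
      exact hfV0 v hv
    set fbar : Y ⧸ V →ₗ[ℂ] ℂ := V.liftQ (f : Y →ₗ[ℂ] ℂ) hle with hfbar
    have hfbarcont : Continuous fbar := by
      rw [(V.isOpenQuotientMap_mkQ).isQuotientMap.continuous_iff]
      have : (⇑fbar ∘ ⇑V.mkQ) = fun y : Y => f y := by
        funext z
        rfl
      rw [this]
      exact f.continuous
    have hcomp2 : Continuous (fun x : X => f (j x)) := by
      have heq2 : (fun x : X => f (j x)) =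
          ⇑fbar ∘ (fun x : X => (Submodule.Quotient.mk (j x) : Y ⧸ V)) := by
        funext x
        rfl
      rw [heq2]
      exact hfbarcont.comp hcont
    set K : X →L[ℂ] ℂ :=
      { toLinearMap := (f : Y →ₗ[ℂ] ℂ).comp j
        cont := hcomp2 } with hK
    obtain ⟨C, hCpos, hC⟩ := K.bound
    exact ⟨f, ⟨C, fun x => hC x⟩, ⟨x₀, hfx₀ne⟩⟩
end
end

section
/- Let Y be a separable Fréchet space (a complete, metrizable, locally convex, separable topological ℂ-vector space), let X be a semi-Hilbert space (a complex vector space with a positive semidefinite hermitian sesquilinear form, complete for the associated seminorm ‖·‖_X), and let j : X → Y be an injective linear map. Assume there exists a closed linear subspace V of Y such that j^{-1}(V) = {x ∈ X : ‖x‖_X = 0} and the map X → Y/V, x ↦ j(x) + V, is continuous for the quotient topology on Y/V. Then X is separable: there is a countable subset of X which is dense for the seminorm ‖·‖_X. -/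
noncomputable section

open Topology

/-- In a second countable space, an uncountable set has a point which lies in the closure
of the rest of the set. -/
theorem aux_exists_closure_pt {α : Type*} [TopologicalSpace α]
    [SecondCountableTopology α]
    {A : Set α} (hA : ¬ A.Countable) : ∃ a ∈ A, a ∈ closure (A \ {a}) := by
  by_contra h
  push_neg at h
  apply hA
  obtain ⟨b, hbc, -, hb⟩ := TopologicalSpace.exists_countable_basis α
  have key : ∀ a ∈ A, ∃ t, t ∈ b ∧ a ∈ t ∧ t ∩ A ⊆ {a} := by
    intro a ha
    have h' := h a ha
    rw [mem_closure_iff] at h'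
    push_neg at h'
    obtain ⟨U, hUo, haU, hU⟩ := h'
    obtain ⟨t, htb, hat, htU⟩ := hb.exists_subset_of_mem_open haU hUo
    refine ⟨t, htb, hat, ?_⟩
    rintro x ⟨hxt, hxA⟩
    by_contra hx
    rw [Set.eq_empty_iff_forall_notMem] at hU
    exact hU x ⟨htU hxt, hxA, hx⟩
  choose! f hf1 hf2 hf3 using key
  have hinj : Set.InjOn f A := by
    intro a1 h1 a2 h2 he
    have : a1 ∈ ({a2} : Set α) := hf3 a2 h2 ⟨he ▸ hf2 a1 h1, h1⟩
    exact this
  refine Set.countable_of_injective_of_countable_image hinj (hbc.mono ?_)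
  rintro - ⟨a, ha, rfl⟩
  exact hf1 a ha

/-- a strongly decent and saturated semi-Hilbert subspace of a
separable Fréchet space is separable. The semi-Hilbert space `X` is modeled as a
complete seminormed complex vector space satisfying the parallelogram law. -/
theorem stmt_19
    (X : Type*) [SeminormedAddCommGroup X] [NormedSpace ℂ X] [CompleteSpace X]
    (hpar : ∀ x y : X, ‖x + y‖ ^ 2 + ‖x - y‖ ^ 2 = 2 * ‖x‖ ^ 2 + 2 * ‖y‖ ^ 2)
    (Y : Type*) [AddCommGroup Y] [Module ℂ Y] [UniformSpace Y] [IsUniformAddGroup Y]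
    [ContinuousSMul ℂ Y] [CompleteSpace Y] [TopologicalSpace.MetrizableSpace Y]
    [Module ℝ Y] [IsScalarTower ℝ ℂ Y] [LocallyConvexSpace ℝ Y]
    [TopologicalSpace.SeparableSpace Y]
    (j : X →ₗ[ℂ] Y) (hj : Function.Injective j)
    (V : Submodule ℂ Y) (hV : IsClosed (V : Set Y))
    (hVnull : ∀ x : X, j x ∈ V ↔ ‖x‖ = 0)
    (hcont : Continuous (fun x : X => (Submodule.Quotient.mk (j x) : Y ⧸ V))) :
    ∃ S : Set X, S.Countable ∧ ∀ x : X, ∀ ε : ℝ, 0 < ε → ∃ y ∈ S, ‖x - y‖ ≤ ε := by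
  classical
  -- ℝ-scalar continuity on `Y`
  haveI : ContinuousSMul ℝ Y := by
    refine ⟨?_⟩
    have hEq : (fun p : ℝ × Y => p.1 • p.2) = fun p : ℝ × Y => ((p.1 : ℂ) • p.2) := by
      funext p
      rw [← algebraMap_smul ℂ p.1 p.2]
      norm_num
    rw [hEq]
    exact (Complex.continuous_ofReal.comp continuous_fst).smul continuous_snd
  -- `Y` is second countable
  haveI : Filter.IsCountablyGenerated (uniformity Y) := by
    rw [uniformity_eq_comap_nhds_zero Y]
    infer_instance
  haveI : SecondCountableTopology Y :=
    UniformSpace.secondCountable_of_separable Y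
  haveI hVc : IsClosed ((V : Submodule ℂ Y) : Set Y) := hV
  haveI : SecondCountableTopology (Y ⧸ V) :=
    inferInstanceAs (SecondCountableTopology (Y ⧸ V.toAddSubgroup))
  haveI : T3Space (Y ⧸ V) := Submodule.t3_quotient_of_isClosed V
  -- the Hilbert quotient of `X`
  have hpar' : ∀ a b : SeparationQuotient X,
      ‖a + b‖ * ‖a + b‖ + ‖a - b‖ * ‖a - b‖ = 2 * (‖a‖ * ‖a‖ + ‖b‖ * ‖b‖) := by
    intro a b
    obtain ⟨x, rfl⟩ := SeparationQuotient.surjective_mk a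
    obtain ⟨y, rfl⟩ := SeparationQuotient.surjective_mk b
    have hxy := hpar x y
    rw [pow_two, pow_two, pow_two, pow_two] at hxy
    rw [← SeparationQuotient.mk_add, ← SeparationQuotient.mk_sub,
      SeparationQuotient.norm_mk, SeparationQuotient.norm_mk,
      SeparationQuotient.norm_mk, SeparationQuotient.norm_mk]
    linarith
  letI : InnerProductSpace ℂ (SeparationQuotient X) := InnerProductSpace.ofNorm (𝕜 := ℂ) (E := SeparationQuotient X) hpar'
  -- the induced continuous map to `Y ⧸ V`
  let m : X → Y ⧸ V := fun x => Submodule.Quotient.mk (j x)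
  have hm : ∀ x y : X, Inseparable x y → m x = m y := fun x y hxy => (hxy.map hcont).eq
  let T : SeparationQuotient X → Y ⧸ V := SeparationQuotient.lift m hm
  have Tcont : Continuous T := SeparationQuotient.continuous_lift hcont
  have Tmk : ∀ x : X, T (SeparationQuotient.mk x) = m x := fun x => rfl
  have Tinj : Function.Injective T := by
    intro a b hab
    obtain ⟨x, rfl⟩ := SeparationQuotient.surjective_mk a
    obtain ⟨y, rfl⟩ := SeparationQuotient.surjective_mk b
    rw [Tmk, Tmk] at hab
    have hmem : j x - j y ∈ V := (Submodule.Quotient.eq V).1 hab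
    rw [← map_sub] at hmem
    have hnorm : ‖x - y‖ = 0 := (hVnull _).1 hmem
    rw [SeparationQuotient.mk_eq_mk, Metric.inseparable_iff, dist_eq_norm]
    exact hnorm
  -- a maximal orthonormal set
  obtain ⟨w, -, hw_on, hw_max⟩ :=
    exists_maximal_orthonormal (𝕜 := ℂ) (orthonormal_empty ℂ (SeparationQuotient X))
  by_cases hwc : w.Countable
  · -- countable case: the quotient is separable, pull back a dense set
    have hsep : TopologicalSpace.IsSeparable
        ((Submodule.span ℂ w : Submodule ℂ (SeparationQuotient X)) : Set (SeparationQuotient X)) :=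
      hwc.isSeparable.span
    have hdense : (Submodule.span ℂ w).topologicalClosure = ⊤ := by
      rw [Submodule.topologicalClosure_eq_top_iff]
      exact (maximal_orthonormal_iff_orthogonalComplement_eq_bot hw_on).1 hw_max
    have hclos : closure ((Submodule.span ℂ w : Submodule ℂ (SeparationQuotient X))
        : Set (SeparationQuotient X)) = Set.univ := by
      rw [← Submodule.topologicalClosure_coe, hdense, Submodule.top_coe]
    obtain ⟨c, hcc, hsubc⟩ := hsep.closure
    let g : SeparationQuotient X → X := Function.surjInv SeparationQuotient.surjective_mk
    refine ⟨g '' c, hcc.image g, ?_⟩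
    intro x ε hε
    have hx : SeparationQuotient.mk x ∈ closure c := by
      apply hsubc
      rw [hclos]
      trivial
    rw [Metric.mem_closure_iff] at hx
    obtain ⟨d, hdc, hdist⟩ := hx ε hε
    refine ⟨g d, Set.mem_image_of_mem g hdc, ?_⟩
    have hgd : SeparationQuotient.mk (g d) = d :=
      Function.surjInv_eq SeparationQuotient.surjective_mk d
    have hxy : ‖x - g d‖ = dist (SeparationQuotient.mk x) d := by
      calc ‖x - g d‖ = ‖SeparationQuotient.mk (x - g d)‖ :=
            (SeparationQuotient.norm_mk _).symm
        _ = ‖SeparationQuotient.mk x - SeparationQuotient.mk (g d)‖ := by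
            rw [SeparationQuotient.mk_sub]
        _ = dist (SeparationQuotient.mk x) d := by rw [hgd, dist_eq_norm]
    rw [hxy]
    exact hdist.le
  · -- uncountable case: derive a contradiction
    exfalso
    have hTwc : ¬ (T '' w).Countable := fun hc =>
      hwc (Set.countable_of_injective_of_countable_image Tinj.injOn hc)
    obtain ⟨a, haw, hacc⟩ := aux_exists_closure_pt hTwc
    obtain ⟨e0, he0w, rfl⟩ := haw
    obtain ⟨x0, rfl⟩ := SeparationQuotient.surjective_mk e0
    have hx0norm : ‖x0‖ = 1 := by
      have h1 := hw_on.1 ⟨_, he0w⟩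
      simpa [SeparationQuotient.norm_mk] using h1
    have hjx0 : j x0 ∉ V := by
      intro hmem
      have h0 := (hVnull x0).1 hmem
      rw [hx0norm] at h0
      norm_num at h0
    -- Hahn–Banach separation of `j x0` from `V`
    have hVconv : Convex ℝ (V : Set Y) := by
      intro p hp q hq s t hs ht hst
      have hp' : s • p ∈ V := by
        rw [← algebraMap_smul ℂ s p]; exact V.smul_mem _ hp
      have hq' : t • q ∈ V := by
        rw [← algebraMap_smul ℂ t q]; exact V.smul_mem _ hq
      exact V.add_mem hp' hq'
    obtain ⟨f, u, hfx, hfV⟩ := geometric_hahn_banach_point_closed hVconv hV hjx0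
    have hu0 : u < 0 := by simpa using hfV 0 V.zero_mem
    have hfV0 : ∀ b ∈ V, f b = 0 := by
      intro b hb
      by_contra hfb
      have h1 : ∀ t : ℝ, u < t * f b := by
        intro t
        have htb : (t • b) ∈ V := by
          rw [← algebraMap_smul ℂ t b]; exact V.smul_mem _ hb
        simpa [map_smul, smul_eq_mul] using hfV _ htb
      have h2 := h1 ((u - 1) / f b)
      rw [div_mul_cancel₀ _ hfb] at h2
      linarith
    -- lift `f` to the quotient
    let Φ : Y ⧸ V → ℝ := fun q => Quotient.liftOn' q f (by
      intro p q hpq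
      have hmem : p - q ∈ V := (Submodule.quotientRel_def V).1 hpq
      have h0 := hfV0 _ hmem
      rw [map_sub] at h0
      linarith)
    have Φcont : Continuous Φ := f.continuous.quotient_liftOn' _
    have Φmk : ∀ y : Y, Φ (Submodule.Quotient.mk y) = f y := fun y => rfl
    -- the continuous real functional on the Hilbert quotient
    let ψlin : SeparationQuotient X →ₗ[ℝ] ℝ :=
      { toFun := fun h => Φ (T h)
        map_add' := by
          intro p q
          obtain ⟨x, rfl⟩ := SeparationQuotient.surjective_mk p
          obtain ⟨y, rfl⟩ := SeparationQuotient.surjective_mk q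
          rw [← SeparationQuotient.mk_add]
          show f (j (x + y)) = f (j x) + f (j y)
          rw [map_add, map_add]
        map_smul' := by
          intro r p
          obtain ⟨x, rfl⟩ := SeparationQuotient.surjective_mk p
          rw [← SeparationQuotient.mk_smul]
          show f (j (r • x)) = r • f (j x)
          rw [j.map_smul_of_tower, map_smul] }
    let ψ : SeparationQuotient X →L[ℝ] ℝ := ⟨ψlin, Φcont.comp Tcont⟩
    have hψ : ∀ h, ψ h = Φ (T h) := fun h => rfl
    -- complexify and apply Riesz representation
    let ψc : SeparationQuotient X →L[ℂ] ℂ := ψ.extendTo𝕜'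
    have hψ_le : ∀ h : SeparationQuotient X, |ψ h| ≤ ‖ψc h‖ := by
      intro h
      have hre : RCLike.re (ψc h) = ψ h := ψ.toLinearMap.extendTo𝕜'_apply_re (𝕜 := ℂ) h
      rw [← hre]
      exact RCLike.abs_re_le_norm _
    let rv : SeparationQuotient X := (InnerProductSpace.toDual ℂ _).symm ψc
    have hrv : ∀ h : SeparationQuotient X, (inner ℂ rv h : ℂ) = ψc h := fun h =>
      InnerProductSpace.toDual_symm_apply
    have hsum : Summable fun i : w => ‖(inner ℂ (i : SeparationQuotient X) rv : ℂ)‖ ^ 2 :=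
      hw_on.inner_products_summable rv
    -- the key estimate
    have hΦa : ∀ ε : ℝ, 0 < ε → |Φ (T (SeparationQuotient.mk x0))| ≤ ε := by
      intro ε hε
      have hfin : {i : w | ε ≤ |ψ (i : SeparationQuotient X)|}.Finite := by
        have hcof := hsum.tendsto_cofinite_zero
        have hev : ∀ᶠ i : w in Filter.cofinite,
            ‖(inner ℂ (i : SeparationQuotient X) rv : ℂ)‖ ^ 2 < ε ^ 2 :=
          hcof.eventually (gt_mem_nhds (by positivity))
        rw [Filter.eventually_cofinite] at hev
        refine hev.subset ?_
        intro i hi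
        simp only [Set.mem_setOf_eq, not_lt]
        calc ε ^ 2 ≤ |ψ (i : SeparationQuotient X)| ^ 2 := by
              exact pow_le_pow_left₀ hε.le hi 2
          _ ≤ ‖ψc (i : SeparationQuotient X)‖ ^ 2 :=
              pow_le_pow_left₀ (abs_nonneg _) (hψ_le _) 2
          _ = ‖(inner ℂ (i : SeparationQuotient X) rv : ℂ)‖ ^ 2 := by
              rw [← hrv, norm_inner_symm]
      set a := T (SeparationQuotient.mk x0) with ha
      set S := T '' (w \ {SeparationQuotient.mk x0}) with hS
      have haS : a ∈ closure S := by
        rw [hS, Set.image_diff Tinj, Set.image_singleton]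
        exact hacc
      have haS' : a ∉ S := by
        rintro ⟨z, hz, hza⟩
        exact hz.2 (Tinj hza)
      set E : Set (Y ⧸ V) :=
        ((fun i : w => T (i : SeparationQuotient X)) ''
          {i : w | ε ≤ |ψ (i : SeparationQuotient X)|}) \ {a} with hE
      have hEfin : E.Finite := (hfin.image _).diff
      have hEc : IsClosed E := hEfin.isClosed
      have hsub2 : closure S ⊆ closure (S \ E) ∪ E := by
        calc closure S ⊆ closure ((S \ E) ∪ E) := closure_mono (by
              intro y hy
              by_cases h : y ∈ E
              · exact Or.inr h
              · exact Or.inl ⟨hy, h⟩)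
          _ ⊆ closure (S \ E) ∪ closure E := by rw [closure_union]
          _ = closure (S \ E) ∪ E := by rw [hEc.closure_eq]
      have haE : a ∉ E := fun h => h.2 rfl
      have ha2 : a ∈ closure (S \ E) := by
        rcases hsub2 haS with h | h
        · exact h
        · exact absurd h haE
      have hbound : S \ E ⊆ {y : Y ⧸ V | |Φ y| ≤ ε} := by
        rintro y ⟨⟨z, hz, rfl⟩, hyE⟩
        by_contra hlt
        simp only [Set.mem_setOf_eq, not_le] at hlt
        apply hyE
        refine ⟨⟨⟨z, hz.1⟩, hlt.le, rfl⟩, ?_⟩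
        intro hmem
        rw [Set.mem_singleton_iff] at hmem
        exact hz.2 (Tinj hmem)
      have hcl : IsClosed {y : Y ⧸ V | |Φ y| ≤ ε} :=
        isClosed_le Φcont.abs continuous_const
      exact (hcl.closure_subset_iff.2 hbound) ha2
    have hΦa0 : Φ (T (SeparationQuotient.mk x0)) = 0 := by
      by_contra h
      have h2 : 0 < |Φ (T (SeparationQuotient.mk x0))| := abs_pos.2 h
      have h3 := hΦa (|Φ (T (SeparationQuotient.mk x0))| / 2) (by linarith)
      linarith
    have hfj : Φ (T (SeparationQuotient.mk x0)) = f (j x0) := rfl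
    rw [hfj] at hΦa0
    linarith
end
end
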